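/- arXiv:1506.04664 — 10 statements merged into one kernel-verified Lean document; each statement's English description precedes it below -/
import Mathlib

section
/- Let μ* : 𝒫(ℕ⁺) → ℝ satisfy: μ*(ℕ⁺) = 1; μ*(X ∪ Y) ≤ μ*(X) + μ*(Y) for all X, Y; and μ*(k·X + h) = (1/k)·μ*(X) for all X ⊆ ℕ⁺ and all positive integers h, k, where k·X + h := {kx + h : x ∈ X}. Then μ*(X) = 0 for every finite X ⊆ ℕ⁺. -/
theorem stmt3 (μ : Set ℕ+ → ℝ)
    (huniv : μ Set.univ = 1)
    (hsub : ∀ X Y : Set ℕ+, μ (X ∪ Y) ≤ μ X + μ Y)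
    (hhom : ∀ (X : Set ℕ+) (h k : ℕ+),
      μ ((fun x => k * x + h) '' X) = ((k : ℕ) : ℝ)⁻¹ * μ X)
    (X : Set ℕ+) (hX : X.Finite) : μ X = 0 := by
  -- empty set has measure 0
  have hempty : μ (∅ : Set ℕ+) = 0 := by
    have := hhom ∅ 1 2
    simp only [Set.image_empty] at this
    have h2 : ((2:ℕ+):ℕ) = 2 := rfl
    rw [h2] at this
    push_cast at this
    linarith
  -- shift invariance for singletons
  have hshift : ∀ x h : ℕ+, μ {x + h} = μ {x} := by
    intro x h
    have := hhom {x} h 1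
    simp only [Set.image_singleton, one_mul, PNat.one_coe, Nat.cast_one, inv_one] at this
    linarith
  -- μ {1} = 0
  have h1 : μ ({1} : Set ℕ+) = 0 := by
    have ha := hhom {1} 1 2
    simp only [Set.image_singleton, mul_one] at ha
    have hb := hshift 1 2
    rw [show ((2:ℕ+) + 1) = 1 + 2 from rfl] at ha
    rw [hb] at ha
    have h2 : ((2:ℕ+):ℕ) = 2 := rfl
    rw [h2] at ha
    push_cast at ha
    linarith
  -- all singletons
  have hsingle : ∀ n : ℕ+, μ {n} = 0 := by
    intro n
    rcases eq_or_lt_of_le n.one_le with h | h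
    · rw [← h]; exact h1
    · have hn : (1:ℕ) < (n:ℕ) := h
      set m : ℕ+ := ⟨(n:ℕ) - 1, by omega⟩ with hm
      have hne : n = 1 + m := by
        apply PNat.coe_injective
        show (n:ℕ) = 1 + ((n:ℕ) - 1)
        omega
      rw [hne, hshift 1 m, h1]
  -- finite sets have μ ≤ 0
  have hfin : ∀ Y : Set ℕ+, Y.Finite → μ Y ≤ 0 := by
    intro Y hY
    refine Set.Finite.induction_on (motive := fun s _ => μ s ≤ 0) Y hY hempty.le ?_
    intro a s _ _ ih
    have heq : insert a s = {a} ∪ s := by simp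
    rw [heq]
    have := hsub {a} s
    rw [hsingle a] at this
    linarith
  -- upper bound
  have hle : μ X ≤ 0 := hfin X hX
  -- lower bound: choose N bounding X
  obtain ⟨N, hbound⟩ : ∃ N : ℕ+, ∀ x ∈ X, x ≤ N :=
    ⟨hX.toFinset.sup id, fun x hx => Finset.le_sup (f := id) (hX.mem_toFinset.mpr hx)⟩
  -- tail set
  set T : Set ℕ+ := (fun x => (1:ℕ+) * x + N) '' Set.univ with hT
  have hTmu : μ T = 1 := by
    rw [hT, hhom Set.univ N 1]
    simp [huniv]
  have hTsub : T ⊆ Xᶜ := by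
    rintro t ⟨x, -, rfl⟩
    intro hmem
    have hb := hbound _ hmem
    simp only [one_mul] at hb
    have hc : ((x + N : ℕ+) : ℕ) ≤ (N:ℕ) := hb
    push_cast at hc
    exact absurd hb (not_le.mpr (PNat.lt_add_left N x))
  have hcompl : Xᶜ = (Xᶜ \ T) ∪ T := by
    rw [Set.diff_union_self]
    exact (Set.union_eq_self_of_subset_right hTsub).symm
  have hAfin : (Xᶜ \ T).Finite := by
    apply Set.Finite.subset (Set.finite_Iic N)
    intro a ⟨ha1, ha2⟩
    by_contra hgt
    simp only [Set.mem_Iic, not_le] at hgt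
    apply ha2
    refine ⟨⟨(a:ℕ) - (N:ℕ), Nat.sub_pos_of_lt (PNat.coe_lt_coe _ _ |>.mpr hgt)⟩, Set.mem_univ _, ?_⟩
    apply PNat.coe_injective
    have hlt : (N:ℕ) < (a:ℕ) := hgt
    push_cast
    show 1 * ((a:ℕ) - (N:ℕ)) + (N:ℕ) = (a:ℕ); rw [one_mul]
    exact Nat.sub_add_cancel (le_of_lt hlt)
  have hXc : μ Xᶜ ≤ 1 := by
    rw [hcompl]
    have := hsub (Xᶜ \ T) T
    have h0 := hfin _ hAfin
    linarith [hTmu ▸ this]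
  have hlow : 1 ≤ μ X + μ Xᶜ := by
    have := hsub X Xᶜ
    rw [Set.union_compl_self, huniv] at this
    linarith
  linarith
end

section
/- Let μ* : 𝒫(ℕ⁺) → ℝ satisfy μ*(ℕ⁺) = 1, subadditivity, and μ*(k·X + h) = (1/k)·μ*(X) for all X ⊆ ℕ⁺ and h, k ∈ ℕ⁺. Fix k ∈ ℕ⁺ and h₁, …, hₙ ∈ ℕ pairwise incongruent modulo k, and let X := ⋃ᵢ (k·ℕ⁺ + hᵢ) (intersected with ℕ⁺). Then μ*(X) = n/k. -/
theorem stmt4 (μ : Set ℕ+ → ℝ)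
    (huniv : μ Set.univ = 1)
    (hsub : ∀ X Y : Set ℕ+, μ (X ∪ Y) ≤ μ X + μ Y)
    (hhom : ∀ (X : Set ℕ+) (h k : ℕ+),
      μ ((fun x => k * x + h) '' X) = ((k : ℕ) : ℝ)⁻¹ * μ X)
    (k : ℕ+) (n : ℕ) (h : Fin n → ℕ)
    (hinc : ∀ i j : Fin n, i ≠ j → h i % (k : ℕ) ≠ h j % (k : ℕ)) :
    μ (⋃ i : Fin n, {x : ℕ+ | ∃ m : ℕ+, (x : ℕ) = (k : ℕ) * (m : ℕ) + h i})
      = (n : ℝ) / ((k : ℕ) : ℝ) := by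
  have hkpos : 0 < (k : ℕ) := k.pos
  have hk0 : (0:ℝ) < ((k:ℕ):ℝ) := by exact_mod_cast hkpos
  -- μ ∅ = 0
  have hempty : μ ∅ = 0 := by
    have h2 := hhom ∅ 1 2
    simp only [Set.image_empty] at h2
    have h22 : ((2:ℕ+):ℕ) = 2 := rfl
    rw [h22] at h2
    push_cast at h2
    linarith
  -- μ is constant on singletons and zero there
  have hsucc : ∀ x : ℕ+, μ {x + 1} = μ {x} := by
    intro x
    have h1 := hhom {x} 1 1
    simp only [Set.image_singleton, one_mul] at h1
    have h11 : ((1:ℕ+):ℕ) = 1 := rfl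
    rw [h11] at h1
    push_cast at h1
    simpa using h1
  have hone : μ {(1:ℕ+)} = 0 := by
    have h3 := hhom {1} 1 2
    simp only [Set.image_singleton] at h3
    have e1 : (2:ℕ+) * 1 + 1 = (1:ℕ+) + 1 + 1 := by decide
    rw [e1, hsucc, hsucc] at h3
    have h22 : ((2:ℕ+):ℕ) = 2 := rfl
    rw [h22] at h3
    push_cast at h3
    linarith
  have hsing : ∀ x : ℕ+, μ {x} = 0 := by
    intro x
    induction x using PNat.recOn with
    | one => exact hone
    | succ m ih => rw [hsucc]; exact ih
  -- finite sets have nonpositive measure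
  have hfin : ∀ S : Set ℕ+, S.Finite → μ S ≤ 0 := by
    intro S hS
    refine Set.Finite.induction_on S hS (motive := fun S _ => μ S ≤ 0) (by simp [hempty]) ?_
    intro a s _ _ ih
    have : μ (insert a s) ≤ μ {a} + μ s := by
      rw [← Set.singleton_union]; exact hsub _ _
    rw [hsing a] at this
    linarith
  -- subadditivity over finite unions
  have hUnionLe : ∀ {β : Type} [DecidableEq β] (T : Finset β) (E : β → Set ℕ+),
      μ (⋃ r ∈ T, E r) ≤ ∑ r ∈ T, μ (E r) := by
    intro β _ T E
    induction T using Finset.induction_on with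
    | empty => simp [hempty]
    | insert a s hx ih =>
      rw [Finset.set_biUnion_insert, Finset.sum_insert hx]
      have := hsub (E a) (⋃ r ∈ s, E r)
      linarith
  -- the sets in question
  set A : Fin n → Set ℕ+ :=
    (fun i => {x : ℕ+ | ∃ m : ℕ+, (x : ℕ) = (k : ℕ) * (m : ℕ) + h i}) with hAdef
  -- upper bound for each A i
  have hAle : ∀ i, μ (A i) ≤ ((k:ℕ):ℝ)⁻¹ := by
    intro i
    have hg : 0 < h i + (k:ℕ) := by omega
    set g : ℕ+ := ⟨h i + (k:ℕ), hg⟩ with hgdef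
    have hp : 0 < (k:ℕ) + h i := by omega
    set p : ℕ+ := ⟨(k:ℕ) + h i, hp⟩ with hpdef
    have hrepr : A i = {p} ∪ ((fun x => k * x + g) '' Set.univ) := by
      ext x
      simp only [hAdef, Set.mem_setOf_eq, Set.mem_union, Set.mem_singleton_iff,
        Set.image_univ, Set.mem_range]
      constructor
      · rintro ⟨m, hm⟩
        rcases eq_or_lt_of_le m.one_le with h1 | h1
        · left
          apply PNat.coe_injective
          rw [hpdef]
          simp [hm, ← h1]
        · right
          have hm2 : 2 ≤ (m:ℕ) := h1
          have hc : 0 < (m:ℕ) - 1 := by omega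
          refine ⟨⟨(m:ℕ) - 1, hc⟩, ?_⟩
          apply PNat.coe_injective
          have : ((k * ⟨(m:ℕ) - 1, hc⟩ + g : ℕ+) : ℕ) = (k:ℕ) * ((m:ℕ) - 1) + (h i + (k:ℕ)) := by
            push_cast [hgdef]
            rfl
          rw [this, hm]
          have : (k:ℕ) * ((m:ℕ) - 1) = (k:ℕ) * (m:ℕ) - (k:ℕ) := by
            rw [Nat.mul_sub_one]
          rw [this]
          have hkm : (k:ℕ) ≤ (k:ℕ) * (m:ℕ) := Nat.le_mul_of_pos_right _ m.pos
          omega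
      · rintro (rfl | ⟨y, rfl⟩)
        · exact ⟨1, by simp [hpdef]⟩
        · refine ⟨y + 1, ?_⟩
          have hgc : (g:ℕ) = h i + (k:ℕ) := rfl
          push_cast [hgc]
          ring
    rw [hrepr]
    have h1 := hsub {p} ((fun x => k * x + g) '' Set.univ)
    rw [hsing p, hhom Set.univ g k, huniv] at h1
    linarith
  -- the complementary residue classes
  have her : ∀ r : ℕ, 0 < r + (k:ℕ) := fun r => by omega
  set E : ℕ → Set ℕ+ := fun r => (fun x => k * x + ⟨r + (k:ℕ), her r⟩) '' Set.univ with hEdef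
  have hEval : ∀ r, μ (E r) = ((k:ℕ):ℝ)⁻¹ := by
    intro r
    rw [hEdef]
    simp only
    rw [hhom Set.univ ⟨r + (k:ℕ), her r⟩ k, huniv, mul_one]
  -- the finite leftover
  set B : ℕ := 3 * (k:ℕ) + Finset.univ.sup h with hBdef
  set G : Set ℕ+ := {x : ℕ+ | (x:ℕ) ≤ B} with hGdef
  have hGfin : G.Finite := by
    have : G ⊆ (fun x : ℕ+ => (x:ℕ)) ⁻¹' (Set.Iic B) := fun x hx => hx
    exact Set.Finite.subset ((Set.finite_Iic B).preimage
      (Set.injOn_of_injective PNat.coe_injective)) this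
  -- the set of uncovered residues
  classical
  set T : Finset ℕ := Finset.range (k:ℕ) \ Finset.image (fun i => h i % (k:ℕ)) Finset.univ
    with hTdef
  have hinj : Function.Injective (fun i => h i % (k:ℕ)) := by
    intro i j hij
    by_contra hne
    exact hinc i j hne hij
  have himg : Finset.image (fun i => h i % (k:ℕ)) Finset.univ ⊆ Finset.range (k:ℕ) := by
    intro r hr
    simp only [Finset.mem_image] at hr
    obtain ⟨i, _, hi⟩ := hr
    exact Finset.mem_range.mpr (hi ▸ Nat.mod_lt _ hkpos)
  have hcardT : T.card = (k:ℕ) - n := by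
    rw [hTdef, Finset.card_sdiff_of_subset himg, Finset.card_range,
      Finset.card_image_of_injective _ hinj, Finset.card_univ, Fintype.card_fin]
  have hnk : n ≤ (k:ℕ) := by
    have := Finset.card_le_card himg
    rwa [Finset.card_image_of_injective _ hinj, Finset.card_univ, Fintype.card_fin,
      Finset.card_range] at this
  -- covering
  have hcover : (Set.univ : Set ℕ+) = (⋃ i, A i) ∪ (⋃ r ∈ T, E r) ∪ G := by
    ext x
    simp only [Set.mem_univ, true_iff, Set.mem_union]
    rcases le_or_gt (x:ℕ) B with hxB | hxB
    · right; exact hxB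
    · left
      by_cases hr : ∃ i, h i % (k:ℕ) = (x:ℕ) % (k:ℕ)
      · left
        obtain ⟨i, hi⟩ := hr
        have hhi : h i ≤ Finset.univ.sup h := Finset.le_sup (Finset.mem_univ i)
        have hle : h i ≤ (x:ℕ) := by omega
        have hdvd : (k:ℕ) ∣ (x:ℕ) - h i :=
          (Nat.modEq_iff_dvd' hle).mp hi
        obtain ⟨c, hc⟩ := hdvd
        have hx' : (x:ℕ) = (k:ℕ) * c + h i := by omega
        have hc0 : 0 < c := by
          rcases Nat.eq_zero_or_pos c with rfl | hc0
          · omega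
          · exact hc0
        refine Set.mem_iUnion.mpr ⟨i, ⟨⟨c, hc0⟩, ?_⟩⟩
        exact hx'
      · right
        push_neg at hr
        set r : ℕ := (x:ℕ) % (k:ℕ) with hrdef
        have hrk : r < (k:ℕ) := Nat.mod_lt _ hkpos
        have hrT : r ∈ T := by
          rw [hTdef, Finset.mem_sdiff]
          refine ⟨Finset.mem_range.mpr hrk, ?_⟩
          simp only [Finset.mem_image, not_exists]
          intro i hi
          exact hr i hi.2
        have hmod : (r + (k:ℕ)) % (k:ℕ) = (x:ℕ) % (k:ℕ) := by
          rw [Nat.add_mod_right, Nat.mod_eq_of_lt hrk]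
        have hle : r + (k:ℕ) ≤ (x:ℕ) := by omega
        have hdvd : (k:ℕ) ∣ (x:ℕ) - (r + (k:ℕ)) :=
          (Nat.modEq_iff_dvd' hle).mp hmod
        obtain ⟨c, hc⟩ := hdvd
        have hx' : (x:ℕ) = (k:ℕ) * c + (r + (k:ℕ)) := by omega
        have hc0 : 0 < c := by
          rcases Nat.eq_zero_or_pos c with rfl | hc0
          · omega
          · exact hc0
        refine Set.mem_biUnion hrT ?_
        rw [hEdef]
        simp only [Set.image_univ, Set.mem_range]
        refine ⟨⟨c, hc0⟩, ?_⟩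
        apply PNat.coe_injective
        show (k:ℕ) * c + (r + (k:ℕ)) = (x:ℕ)
        omega
  -- lower bound
  have hlow : (n:ℝ) / ((k:ℕ):ℝ) ≤ μ (⋃ i, A i) := by
    have h1 : (1:ℝ) = μ ((⋃ i, A i) ∪ (⋃ r ∈ T, E r) ∪ G) := by
      rw [← hcover]; exact huniv.symm
    have h2 : μ ((⋃ i, A i) ∪ (⋃ r ∈ T, E r) ∪ G)
        ≤ μ (⋃ i, A i) + μ (⋃ r ∈ T, E r) + μ G := by
      have ha := hsub ((⋃ i, A i) ∪ (⋃ r ∈ T, E r)) G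
      have hb := hsub (⋃ i, A i) (⋃ r ∈ T, E r)
      linarith
    have h3 : μ (⋃ r ∈ T, E r) ≤ (((k:ℕ) - n : ℕ):ℝ) * ((k:ℕ):ℝ)⁻¹ := by
      have := hUnionLe T E
      have hsum : ∑ r ∈ T, μ (E r) = (T.card : ℝ) * ((k:ℕ):ℝ)⁻¹ := by
        rw [Finset.sum_congr rfl (fun r _ => hEval r), Finset.sum_const, nsmul_eq_mul]
      rw [hsum, hcardT] at this
      exact this
    have h4 : μ G ≤ 0 := hfin G hGfin
    have h5 : (((k:ℕ) - n : ℕ):ℝ) = ((k:ℕ):ℝ) - (n:ℝ) := by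
      rw [Nat.cast_sub hnk]
    rw [h5] at h3
    have hkne : ((k:ℕ):ℝ) ≠ 0 := ne_of_gt hk0
    have : (1:ℝ) ≤ μ (⋃ i, A i) + (((k:ℕ):ℝ) - (n:ℝ)) * ((k:ℕ):ℝ)⁻¹ := by linarith
    rw [div_eq_mul_inv]
    have hexp : (((k:ℕ):ℝ) - (n:ℝ)) * ((k:ℕ):ℝ)⁻¹ = 1 - (n:ℝ) * ((k:ℕ):ℝ)⁻¹ := by
      field_simp
    rw [hexp] at this
    linarith
  -- upper bound
  have hup : μ (⋃ i, A i) ≤ (n:ℝ) / ((k:ℕ):ℝ) := by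
    have h1 : (⋃ i, A i) = ⋃ i ∈ (Finset.univ : Finset (Fin n)), A i := by
      simp
    rw [h1]
    have h2 := hUnionLe (Finset.univ : Finset (Fin n)) A
    have h3 : ∑ i ∈ (Finset.univ : Finset (Fin n)), μ (A i)
        ≤ ∑ _i ∈ (Finset.univ : Finset (Fin n)), ((k:ℕ):ℝ)⁻¹ :=
      Finset.sum_le_sum fun i _ => hAle i
    rw [Finset.sum_const, Finset.card_univ, Fintype.card_fin, nsmul_eq_mul] at h3
    rw [div_eq_mul_inv]
    linarith
  exact le_antisymm hup hlow
end

section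
/- Let μ* : 𝒫(ℕ⁺) → ℝ satisfy μ*(ℕ⁺) = 1, subadditivity, and μ*(k·X + h) = (1/k)·μ*(X) for all X ⊆ ℕ⁺ and h, k ∈ ℕ⁺. Then every rational number in [0,1] lies in the image of μ*. -/
/-- helper: the positive natural `h + 1`. -/
def pp (h : ℕ) : ℕ+ := ⟨h + 1, Nat.succ_pos h⟩

theorem stmt5 (μ : Set ℕ+ → ℝ)
    (huniv : μ Set.univ = 1)
    (hsub : ∀ X Y : Set ℕ+, μ (X ∪ Y) ≤ μ X + μ Y)
    (hhom : ∀ (X : Set ℕ+) (h k : ℕ+),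
      μ ((fun x => k * x + h) '' X) = ((k : ℕ) : ℝ)⁻¹ * μ X) :
    ∀ q : ℚ, 0 ≤ q → q ≤ 1 → ∃ X : Set ℕ+, μ X = (q : ℝ) := by
  -- μ of empty set is 0
  have hempty : μ ∅ = 0 := by
    have := hhom ∅ 1 2
    simp only [Set.image_empty] at this
    norm_num at this
    linarith
  -- μ of singletons
  have hshift : ∀ k h : ℕ+, μ {k + h} = ((k : ℕ) : ℝ)⁻¹ * μ {1} := by
    intro k h
    have := hhom {1} h k
    rw [Set.image_singleton, mul_one] at this
    exact this
  have hone : μ {(1 : ℕ+)} = 0 := by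
    have h1 := hshift 1 2
    have h2 := hshift 2 1
    have e : (1 : ℕ+) + 2 = 2 + 1 := by decide
    rw [e] at h1
    rw [h1] at h2
    norm_num at h2 ⊢
    linarith
  have hsingle : ∀ i : ℕ, μ {pp i} = 0 := by
    intro i
    cases i with
    | zero => exact hone
    | succ j =>
      have e : pp (j + 1) = 1 + pp j := by
        apply Subtype.ext
        show j + 1 + 1 = ((1 : ℕ+) : ℕ) + (j + 1)
        rw [PNat.one_coe]
        omega
      rw [e, hshift 1 (pp j)]
      simp [hone]
  -- subadditivity for finite unions
  have hbUnion : ∀ (s : Finset ℕ) (A : ℕ → Set ℕ+),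
      μ (⋃ i ∈ s, A i) ≤ ∑ i ∈ s, μ (A i) := by
    intro s A
    induction s using Finset.induction with
    | empty => simp [hempty]
    | @insert _ _ hni ih =>
      rw [Finset.set_biUnion_insert, Finset.sum_insert hni]
      exact le_trans (hsub _ _) (by linarith)
  intro q hq0 hq1
  set b : ℕ := q.den with hbdef
  have hb : 0 < b := q.pos
  set a : ℕ := q.num.toNat with hadef
  have hnum : (q.num : ℚ) = (a : ℚ) := by
    rw [hadef]
    exact_mod_cast (Int.toNat_of_nonneg (Rat.num_nonneg.mpr hq0)).symm
  have hab : a ≤ b := by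
    have hq : (q.num : ℚ) / (q.den : ℚ) ≤ 1 := by rw [Rat.num_div_den]; exact hq1
    have h : (q.num : ℚ) ≤ (q.den : ℚ) :=
      (div_le_one (by exact_mod_cast hb)).mp hq
    rw [hnum] at h
    exact_mod_cast h
  -- the residue classes
  set bp : ℕ+ := ⟨b, hb⟩ with hbp
  set C : ℕ → Set ℕ+ := fun h => (fun x => bp * x + pp h) '' Set.univ with hC
  have hCval : ∀ h : ℕ, μ (C h) = ((b : ℕ) : ℝ)⁻¹ := by
    intro h
    have := hhom Set.univ (pp h) bp
    rw [huniv, mul_one] at this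
    exact this
  -- the finite leftover
  set F : Set ℕ+ := ⋃ i ∈ Finset.range b, ({pp i} : Set ℕ+) with hF
  have hFle : μ F ≤ 0 := by
    calc μ F ≤ ∑ i ∈ Finset.range b, μ {pp i} := hbUnion _ _
    _ = 0 := by simp [hsingle]
  -- the cover
  have hcover : Set.univ ⊆ (⋃ h ∈ Finset.range b, C h) ∪ F := by
    intro n _
    by_cases hn : (n : ℕ) ≤ b
    · right
      rw [hF]
      simp only [Set.mem_iUnion, Finset.mem_range, Set.mem_singleton_iff]
      have hnpos := n.pos
      refine ⟨(n : ℕ) - 1, by omega, ?_⟩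
      apply Subtype.ext
      show n = ((n : ℕ) - 1 + 1 : ℕ)
      omega
    · left
      push_neg at hn
      simp only [Set.mem_iUnion, Finset.mem_range]
      refine ⟨((n : ℕ) - 1) % b, Nat.mod_lt _ hb, ?_⟩
      rw [hC]
      have hx : 0 < ((n : ℕ) - 1) / b := Nat.div_pos (by omega) hb
      refine ⟨⟨((n : ℕ) - 1) / b, hx⟩, Set.mem_univ _, ?_⟩
      apply Subtype.ext
      show b * (((n : ℕ) - 1) / b) + (((n : ℕ) - 1) % b + 1) = (n : ℕ)
      have h2 : b * (((n : ℕ) - 1) / b) + ((n : ℕ) - 1) % b = (n : ℕ) - 1 :=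
        Nat.div_add_mod _ _
      omega
  have hcover' : Set.univ =
      (⋃ h ∈ Finset.range a, C h) ∪ ((⋃ h ∈ Finset.Ico a b, C h) ∪ F) := by
    apply Set.Subset.antisymm
    · refine hcover.trans ?_
      have hsplit : Finset.range b = Finset.range a ∪ Finset.Ico a b := by
        simp only [Finset.range_eq_Ico]
        exact (Finset.Ico_union_Ico_eq_Ico (Nat.zero_le a) hab).symm
      rw [hsplit, Finset.set_biUnion_union]
      intro x hx
      rcases hx with (hx | hx) | hx
      · exact Or.inl hx
      · exact Or.inr (Or.inl hx)
      · exact Or.inr (Or.inr hx)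
    · exact Set.subset_univ _
  -- the candidate set
  refine ⟨⋃ h ∈ Finset.range a, C h, ?_⟩
  have hub : μ (⋃ h ∈ Finset.range a, C h) ≤ (a : ℝ) * ((b : ℕ) : ℝ)⁻¹ := by
    calc μ (⋃ h ∈ Finset.range a, C h) ≤ ∑ h ∈ Finset.range a, μ (C h) := hbUnion _ _
    _ = (a : ℝ) * ((b : ℕ) : ℝ)⁻¹ := by
        simp [hCval, Finset.sum_const, mul_comm]
  have hmid : μ (⋃ h ∈ Finset.Ico a b, C h) ≤ ((b - a : ℕ) : ℝ) * ((b : ℕ) : ℝ)⁻¹ := by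
    calc μ (⋃ h ∈ Finset.Ico a b, C h) ≤ ∑ h ∈ Finset.Ico a b, μ (C h) := hbUnion _ _
    _ = ((b - a : ℕ) : ℝ) * ((b : ℕ) : ℝ)⁻¹ := by
        simp [hCval, Finset.sum_const, Nat.card_Ico, mul_comm]
  have hlb : (1 : ℝ) ≤ μ (⋃ h ∈ Finset.range a, C h)
      + (μ (⋃ h ∈ Finset.Ico a b, C h) + μ F) := by
    calc (1 : ℝ) = μ Set.univ := huniv.symm
    _ = μ ((⋃ h ∈ Finset.range a, C h) ∪ ((⋃ h ∈ Finset.Ico a b, C h) ∪ F)) := by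
        rw [← hcover']
    _ ≤ μ (⋃ h ∈ Finset.range a, C h) + μ ((⋃ h ∈ Finset.Ico a b, C h) ∪ F) := hsub _ _
    _ ≤ _ := by have := hsub (⋃ h ∈ Finset.Ico a b, C h) F; linarith
  have hbR : (0 : ℝ) < (b : ℝ) := by exact_mod_cast hb
  have hcast : ((b - a : ℕ) : ℝ) = (b : ℝ) - (a : ℝ) := by
    push_cast [Nat.cast_sub hab]; ring
  have hq : (q : ℝ) = (a : ℝ) * ((b : ℕ) : ℝ)⁻¹ := by
    rw [Rat.cast_def]
    have : ((q.num : ℝ)) = (a : ℝ) := by exact_mod_cast hnum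
    rw [this, ← hbdef, div_eq_mul_inv]
  rw [hq]
  have hbinv : (b : ℝ) * ((b : ℕ) : ℝ)⁻¹ = 1 := by
    field_simp
  nlinarith [hmid, hub, hlb, hFle, hcast, hbinv]
end

section
/- Let μ* : 𝒫(ℕ⁺) → ℝ be an upper quasi-density, i.e. μ*(ℕ⁺) = 1, μ*(X) ≤ 1 for all X, μ*(X ∪ Y) ≤ μ*(X) + μ*(Y), and μ*(k·X + h) = (1/k)·μ*(X) for all X and h, k ∈ ℕ⁺. Suppose (kᵢ)ᵢ≥1 and (hᵢ)ᵢ≥1 are sequences with kᵢ ≥ 1, kᵢ ∣ kᵢ₊₁ for all i, and for i < j there is no integer x with kᵢx + hᵢ ≡ hⱼ (mod kⱼ). Then for every n, μ*(⋃ᵢ₌₁ⁿ (kᵢ·ℕ⁺ + hᵢ)) = Σᵢ₌₁ⁿ 1/kᵢ. -/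
section
variable (μ : Set ℕ+ → ℝ)

lemma mu_empty (hhom : ∀ (X : Set ℕ+) (h k : ℕ+),
      μ ((fun x => k * x + h) '' X) = ((k : ℕ) : ℝ)⁻¹ * μ X) : μ ∅ = 0 := by
  have h2 := hhom ∅ 1 2
  simp only [Set.image_empty] at h2
  have : ((2:ℕ+):ℕ) = 2 := rfl
  rw [this] at h2
  push_cast at h2
  linarith

lemma mu_single (hhom : ∀ (X : Set ℕ+) (h k : ℕ+),
      μ ((fun x => k * x + h) '' X) = ((k : ℕ) : ℝ)⁻¹ * μ X) (a : ℕ+) : μ {a} = 0 := by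
  have key : μ {(1:ℕ+)} = 0 := by
    have h1 := hhom {1} 1 2
    have h2 := hhom {1} 2 1
    simp only [Set.image_singleton] at h1 h2
    have e1 : (2 * 1 + 1 : ℕ+) = 3 := rfl
    have e2 : (1 * 1 + 2 : ℕ+) = 3 := rfl
    rw [e1] at h1; rw [e2] at h2
    have c2 : (((2:ℕ+):ℕ):ℝ) = 2 := by norm_num
    have c1 : (((1:ℕ+):ℕ):ℝ) = 1 := by norm_num
    rw [c2] at h1; rw [c1] at h2
    rw [h2] at h1
    linarith
  rcases Nat.lt_or_ge (a:ℕ) 2 with hlt | hge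
  · have : a = 1 := by
      apply PNat.coe_injective
      rw [PNat.one_coe]
      have h2 := a.pos
      omega
    rw [this]; exact key
  · have hb : 0 < (a:ℕ) - 1 := by omega
    set b : ℕ+ := ⟨(a:ℕ) - 1, hb⟩ with hbdef
    have h1 := hhom {1} b 1
    simp only [Set.image_singleton] at h1
    have e1 : (1 * 1 + b : ℕ+) = a := by
      apply PNat.coe_injective
      rw [PNat.add_coe, PNat.mul_coe, PNat.one_coe]
      show 1 * 1 + ((a:ℕ) - 1) = (a:ℕ)
      omega
    rw [e1] at h1
    have c1 : (((1:ℕ+):ℕ):ℝ) = 1 := by norm_num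
    rw [c1, key] at h1
    simpa using h1

lemma mu_finite (hsub : ∀ X Y : Set ℕ+, μ (X ∪ Y) ≤ μ X + μ Y)
    (hhom : ∀ (X : Set ℕ+) (h k : ℕ+),
      μ ((fun x => k * x + h) '' X) = ((k : ℕ) : ℝ)⁻¹ * μ X)
    (S : Set ℕ+) (hS : S.Finite) : μ S ≤ 0 := by
  refine Set.Finite.induction_on (motive := fun S _ => μ S ≤ 0) S hS (by simp [mu_empty μ hhom]) ?_
  intro a S' _ _ IH
  have hins : insert a S' = {a} ∪ S' := by simp
  rw [hins]
  calc μ ({a} ∪ S') ≤ μ {a} + μ S' := hsub _ _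
  _ ≤ 0 := by rw [mu_single μ hhom a]; linarith

lemma mu_prog_le (huniv : μ Set.univ = 1)
    (hsub : ∀ X Y : Set ℕ+, μ (X ∪ Y) ≤ μ X + μ Y)
    (hhom : ∀ (X : Set ℕ+) (h k : ℕ+),
      μ ((fun x => k * x + h) '' X) = ((k : ℕ) : ℝ)⁻¹ * μ X)
    (a r : ℕ+) :
    μ {x : ℕ+ | ∃ m : ℕ, (x:ℕ) = a * m + r} ≤ ((a:ℕ):ℝ)⁻¹ := by
  have hset : {x : ℕ+ | ∃ m : ℕ, (x:ℕ) = a * m + r}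
      = ((fun x => a * x + r) '' Set.univ) ∪ {r} := by
    ext x
    simp only [Set.mem_setOf_eq, Set.mem_union, Set.mem_image, Set.mem_univ, true_and,
      Set.mem_singleton_iff]
    constructor
    · rintro ⟨m, hm⟩
      rcases m with _ | m'
      · right; apply PNat.coe_injective; simpa using hm
      · left
        refine ⟨⟨m'+1, Nat.succ_pos _⟩, ?_⟩
        apply PNat.coe_injective
        simp [PNat.mul_coe, PNat.add_coe]
        show (a : ℕ) * (m' + 1) + (r : ℕ) = (x : ℕ)
        omega
    · rintro (⟨y, rfl⟩ | rfl)
      · exact ⟨(y:ℕ), by simp [PNat.mul_coe, PNat.add_coe]⟩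
      · exact ⟨0, by simp⟩
  rw [hset]
  calc μ _ ≤ μ ((fun x => a * x + r) '' Set.univ) + μ {r} := hsub _ _
  _ = ((a:ℕ):ℝ)⁻¹ * 1 + 0 := by rw [hhom, huniv, mu_single μ hhom r]
  _ = ((a:ℕ):ℝ)⁻¹ := by ring

lemma mu_biUnion_le (hsub : ∀ X Y : Set ℕ+, μ (X ∪ Y) ≤ μ X + μ Y)
    (hhom : ∀ (X : Set ℕ+) (h k : ℕ+),
      μ ((fun x => k * x + h) '' X) = ((k : ℕ) : ℝ)⁻¹ * μ X)
    {ι : Type*} [DecidableEq ι] (s : Finset ι) (A : ι → Set ℕ+) :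
    μ (⋃ i ∈ s, A i) ≤ ∑ i ∈ s, μ (A i) := by
  induction s using Finset.induction_on with
  | empty => simp [mu_empty μ hhom]
  | insert _ _ hni IH =>
    rename_i a s
    rw [Finset.set_biUnion_insert, Finset.sum_insert hni]
    calc μ (A a ∪ ⋃ i ∈ s, A i) ≤ μ (A a) + μ (⋃ i ∈ s, A i) := hsub _ _
    _ ≤ μ (A a) + ∑ i ∈ s, μ (A i) := by linarith
end

theorem stmt6 (μ : Set ℕ+ → ℝ)
    (huniv : μ Set.univ = 1) (hle : ∀ X : Set ℕ+, μ X ≤ 1)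
    (hsub : ∀ X Y : Set ℕ+, μ (X ∪ Y) ≤ μ X + μ Y)
    (hhom : ∀ (X : Set ℕ+) (h k : ℕ+),
      μ ((fun x => k * x + h) '' X) = ((k : ℕ) : ℝ)⁻¹ * μ X)
    (k : ℕ → ℕ+) (h : ℕ → ℕ)
    (hdvd : ∀ i, 1 ≤ i → (k i : ℕ) ∣ (k (i + 1) : ℕ))
    (hnc : ∀ i j, 1 ≤ i → i < j →
      ¬ ∃ x : ℤ, Int.ModEq ((k j : ℕ) : ℤ) (((k i : ℕ) : ℤ) * x + (h i : ℤ)) (h j : ℤ)) :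
    ∀ n, 1 ≤ n →
      μ (⋃ i ∈ Finset.Icc 1 n, {x : ℕ+ | ∃ m : ℕ+, (x : ℕ) = (k i : ℕ) * (m : ℕ) + h i})
        = ∑ i ∈ Finset.Icc 1 n, ((k i : ℕ) : ℝ)⁻¹ := by
  intro n hn
  classical
  set K : ℕ := (k n : ℕ) with hKdef
  have hKpos : 0 < K := (k n).pos
  set A : ℕ → Set ℕ+ :=
    fun i => {x : ℕ+ | ∃ m : ℕ+, (x : ℕ) = (k i : ℕ) * (m : ℕ) + h i} with hA
  set U : Set ℕ+ := ⋃ i ∈ Finset.Icc 1 n, A i with hUdef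
  -- divisibility chain
  have hchain : ∀ i j, 1 ≤ i → i ≤ j → (k i : ℕ) ∣ (k j : ℕ) := by
    intro i j hi hij
    induction j, hij using Nat.le_induction with
    | base => exact dvd_rfl
    | succ j hij IH => exact IH.trans (hdvd j (le_trans hi hij))
  -- incongruence
  have hmod : ∀ i j, 1 ≤ i → i < j → (h j) % (k i : ℕ) ≠ (h i) % (k i : ℕ) := by
    intro i j hi hij hcon
    apply hnc i j hi hij
    obtain ⟨t, ht⟩ := (show Nat.ModEq (k i : ℕ) (h j) (h i) from hcon).dvd
    refine ⟨-t, ?_⟩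
    have heq : ((k i : ℕ) : ℤ) * (-t) + (h i : ℤ) = (h j : ℤ) := by linarith
    rw [heq]
  -- upper bound for each progression
  have hAle : ∀ i, μ (A i) ≤ ((k i : ℕ) : ℝ)⁻¹ := by
    intro i
    have hkpos : 0 < (k i : ℕ) + h i := by have := (k i).pos; omega
    set r : ℕ+ := ⟨(k i : ℕ) + h i, hkpos⟩ with hrdef
    have hset : A i = {x : ℕ+ | ∃ m : ℕ, (x : ℕ) = ((k i : ℕ+) : ℕ) * m + (r : ℕ)} := by
      ext x
      simp only [hA, Set.mem_setOf_eq]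
      constructor
      · rintro ⟨m, hm⟩
        obtain ⟨m', hm'⟩ : ∃ m', (m : ℕ) = m' + 1 := ⟨(m : ℕ) - 1, by have := m.pos; omega⟩
        rw [hm', Nat.mul_succ] at hm
        exact ⟨m', by show (x : ℕ) = (k i : ℕ) * m' + ((k i : ℕ) + h i); omega⟩
      · rintro ⟨m, hm⟩
        refine ⟨⟨m + 1, Nat.succ_pos _⟩, ?_⟩
        show (x : ℕ) = (k i : ℕ) * (m + 1) + h i
        have hm2 : (x : ℕ) = (k i : ℕ) * m + ((k i : ℕ) + h i) := hm
        rw [Nat.mul_succ]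
        omega
    rw [hset]
    exact mu_prog_le μ huniv hsub hhom (k i) r
  have hub : μ U ≤ ∑ i ∈ Finset.Icc 1 n, ((k i : ℕ) : ℝ)⁻¹ :=
    le_trans (mu_biUnion_le μ hsub hhom _ A)
      (Finset.sum_le_sum fun i _ => hAle i)
  -- residues
  set R : Finset ℕ := (Finset.Icc 1 K).filter
      (fun r => ∀ i ∈ Finset.Icc 1 n, r % (k i : ℕ) ≠ h i % (k i : ℕ)) with hRdef
  set C : ℕ → Set ℕ+ := fun r => {x : ℕ+ | ∃ m : ℕ, (x : ℕ) = K * m + r} with hCdef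
  set B : ℕ := ∑ i ∈ Finset.Icc 1 n, h i with hBdef
  set F : Set ℕ+ := Uᶜ ∩ {x : ℕ+ | (x : ℕ) ≤ B} with hFdef
  have hBle : ∀ i ∈ Finset.Icc 1 n, h i ≤ B :=
    fun i hi => Finset.single_le_sum (fun j _ => Nat.zero_le _) hi
  -- decomposition of the complement
  have hdecomp : Uᶜ = (⋃ r ∈ R, C r) ∪ F := by
    apply Set.Subset.antisymm
    · intro x hx
      have hx1 : 1 ≤ (x : ℕ) := x.pos
      set r0 : ℕ := ((x : ℕ) - 1) % K + 1 with hr0def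
      have hmlt : ((x : ℕ) - 1) % K < K := Nat.mod_lt _ hKpos
      have hr0le : r0 ≤ K := by omega
      have hr0ge : 1 ≤ r0 := by omega
      have hq : (x : ℕ) = K * (((x : ℕ) - 1) / K) + r0 := by
        have := Nat.div_add_mod ((x : ℕ) - 1) K
        omega
      have hxr0 : (x : ℕ) % K = r0 % K := by rw [hq, Nat.mul_add_mod]
      by_cases hcase : r0 ∈ R
      · left
        exact Set.mem_biUnion hcase ⟨((x : ℕ) - 1) / K, hq⟩
      · right
        have hr0Icc : r0 ∈ Finset.Icc 1 K := Finset.mem_Icc.2 ⟨hr0ge, hr0le⟩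
        rw [hRdef] at hcase; simp only [Finset.mem_filter] at hcase
        push_neg at hcase
        obtain ⟨i, hiIcc, hcong⟩ := hcase hr0Icc
        have hiIcc' := Finset.mem_Icc.1 hiIcc
        have hki : (k i : ℕ) ∣ K := hchain i n hiIcc'.1 hiIcc'.2
        have hxki : (x : ℕ) % (k i : ℕ) = h i % (k i : ℕ) := by
          have h1 : Nat.ModEq (k i : ℕ) (x : ℕ) r0 :=
            Nat.ModEq.of_dvd hki hxr0
          exact h1.trans hcong
        by_cases hxh : h i < (x : ℕ)
        · exfalso
          apply hx
          have hdd : (k i : ℕ) ∣ (x : ℕ) - h i :=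
            (Nat.modEq_iff_dvd' (le_of_lt hxh)).1 hxki.symm
          obtain ⟨c, hc⟩ := hdd
          have hcpos : 0 < c := by
            rcases Nat.eq_zero_or_pos c with h0 | h0
            · rw [h0, Nat.mul_zero] at hc; omega
            · exact h0
          refine Set.mem_biUnion hiIcc ⟨⟨c, hcpos⟩, ?_⟩
          show (x : ℕ) = (k i : ℕ) * c + h i
          omega
        · exact ⟨hx, le_trans (by omega) (hBle i hiIcc)⟩
    · rintro x (hx | hx)
      · simp only [Set.mem_iUnion] at hx
        obtain ⟨r, hrR, m, hm⟩ := hx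
        intro hxU
        rw [hUdef] at hxU
        simp only [Set.mem_iUnion] at hxU
        obtain ⟨i, hiIcc, mi, hmi⟩ := hxU
        have hiIcc' := Finset.mem_Icc.1 hiIcc
        have hki : (k i : ℕ) ∣ K := hchain i n hiIcc'.1 hiIcc'.2
        rw [hRdef] at hrR; simp only [Finset.mem_filter] at hrR
        apply hrR.2 i hiIcc
        have h1 : (x : ℕ) % K = r % K := by rw [hm, Nat.mul_add_mod]
        have h2 : Nat.ModEq (k i : ℕ) (x : ℕ) r := Nat.ModEq.of_dvd hki h1
        have h3 : (x : ℕ) % (k i : ℕ) = h i % (k i : ℕ) := by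
          rw [hmi, Nat.mul_add_mod]
        exact h2.symm.trans (Nat.ModEq.trans (by rfl) h3)
      · exact hx.1
  -- F is finite
  have hFfin : F.Finite := by
    have : {x : ℕ+ | (x : ℕ) ≤ B}.Finite := by
      have : {x : ℕ+ | (x : ℕ) ≤ B} = (fun x : ℕ+ => (x : ℕ)) ⁻¹' Set.Iic B := rfl
      rw [this]
      exact Set.Finite.preimage (fun a _ b _ hab => PNat.coe_injective hab)
        (Set.finite_Iic B)
    exact Set.Finite.inter_of_right this _
  -- bound on the complement
  have hCle : ∀ r ∈ R, μ (C r) ≤ ((K : ℕ) : ℝ)⁻¹ := by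
    intro r hr
    rw [hRdef] at hr; simp only [Finset.mem_filter, Finset.mem_Icc] at hr
    exact mu_prog_le μ huniv hsub hhom ⟨K, hKpos⟩ ⟨r, hr.1.1⟩
  have hc1 : μ Uᶜ ≤ (R.card : ℝ) * ((K : ℝ))⁻¹ := by
    rw [hdecomp]
    calc μ ((⋃ r ∈ R, C r) ∪ F) ≤ μ (⋃ r ∈ R, C r) + μ F := hsub _ _
    _ ≤ (∑ r ∈ R, μ (C r)) + 0 :=
        add_le_add (mu_biUnion_le μ hsub hhom _ C) (mu_finite μ hsub hhom F hFfin)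
    _ ≤ (∑ r ∈ R, ((K : ℝ))⁻¹) + 0 := by
        apply add_le_add_left
        exact Finset.sum_le_sum hCle
    _ = (R.card : ℝ) * ((K : ℝ))⁻¹ := by
        rw [Finset.sum_const, nsmul_eq_mul, add_zero]
  -- counting
  set cov : ℕ → Finset ℕ :=
    fun i => (Finset.Icc 1 K).filter (fun r => r % (k i : ℕ) = h i % (k i : ℕ)) with hcovdef
  have hcard : ∀ i ∈ Finset.Icc 1 n, K / (k i : ℕ) ≤ (cov i).card := by
    intro i hi
    have hiIcc' := Finset.mem_Icc.1 hi
    have hki : (k i : ℕ) ∣ K := hchain i n hiIcc'.1 hiIcc'.2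
    have hdpos : 0 < (k i : ℕ) := (k i).pos
    set d : ℕ := (k i : ℕ) with hddef
    set c' : ℕ := if h i % d = 0 then d else h i % d with hc'def
    have hc'1 : 1 ≤ c' := by
      rw [hc'def]; split <;> omega
    have hc'd : c' ≤ d := by
      rw [hc'def]; split
      · exact le_refl d
      · exact le_of_lt (Nat.mod_lt _ hdpos)
    have hc'mod : c' % d = h i % d := by
      rw [hc'def]; split
      · rename_i h0; rw [Nat.mod_self, h0]
      · exact Nat.mod_mod_of_dvd _ dvd_rfl
    have hdleK : d ≤ K := Nat.le_of_dvd hKpos hki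
    have hKd : 1 ≤ K / d := (Nat.one_le_div_iff hdpos).2 hdleK
    have hsub' : (Finset.range (K / d)).image (fun m => d * m + c') ⊆ cov i := by
      intro y hy
      simp only [Finset.mem_image, Finset.mem_range] at hy
      obtain ⟨m, hm, rfl⟩ := hy
      rw [hcovdef, Finset.mem_filter, Finset.mem_Icc]
      refine ⟨⟨by omega, ?_⟩, ?_⟩
      · obtain ⟨e, he⟩ : ∃ e, K / d = e + 1 := ⟨K / d - 1, by omega⟩
        have hmle : m ≤ e := by omega
        have h1 : d * m + c' ≤ d * e + d :=
          add_le_add (Nat.mul_le_mul_left d hmle) hc'd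
        have h2 : d * e + d = d * (e + 1) := by ring
        have h3 : d * (e + 1) = d * (K / d) := by rw [he]
        have h4 : d * (K / d) = K := Nat.mul_div_cancel' hki
        omega
      · rw [Nat.mul_add_mod, hc'mod]
    have hinj : Set.InjOn (fun m => d * m + c') ↑(Finset.range (K / d)) := by
      intro a _ b _ hab
      simp only at hab
      have : d * a = d * b := by omega
      exact Nat.eq_of_mul_eq_mul_left hdpos this
    calc K / d = (Finset.range (K / d)).card := (Finset.card_range _).symm
    _ = ((Finset.range (K / d)).image (fun m => d * m + c')).card :=
        (Finset.card_image_of_injOn hinj).symm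
    _ ≤ (cov i).card := Finset.card_le_card hsub'
  have hdisj : ∀ i ∈ Finset.Icc 1 n, ∀ j ∈ Finset.Icc 1 n, i ≠ j →
      Disjoint (cov i) (cov j) := by
    have key : ∀ i ∈ Finset.Icc 1 n, ∀ j ∈ Finset.Icc 1 n, i < j →
        Disjoint (cov i) (cov j) := by
      intro i hi j hj hij
      rw [Finset.disjoint_left]
      intro r hri hrj
      rw [hcovdef, Finset.mem_filter] at hri hrj
      have hi1 := (Finset.mem_Icc.1 hi).1
      have hkij : (k i : ℕ) ∣ (k j : ℕ) := by
        rcases Nat.lt_or_ge i j with _ | hge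
        · exact (hchain i j hi1 (le_of_lt hij))
        · omega
      have h1 : Nat.ModEq (k i : ℕ) r (h j) := Nat.ModEq.of_dvd hkij hrj.2
      have h2 : (h j) % (k i : ℕ) = (h i) % (k i : ℕ) := h1.symm.trans hri.2
      exact hmod i j hi1 hij h2
    intro i hi j hj hij
    rcases Nat.lt_or_ge i j with hlt | hge
    · exact key i hi j hj hlt
    · have : j < i := by omega
      exact (key j hj i hi this).symm
  have hRdisj : Disjoint R ((Finset.Icc 1 n).biUnion cov) := by
    rw [Finset.disjoint_left]
    intro r hrR hrT
    rw [Finset.mem_biUnion] at hrT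
    obtain ⟨i, hi, hri⟩ := hrT
    rw [hcovdef, Finset.mem_filter] at hri
    rw [hRdef] at hrR; simp only [Finset.mem_filter] at hrR
    exact hrR.2 i hi hri.2
  have htot : R.card + ∑ i ∈ Finset.Icc 1 n, (cov i).card ≤ K := by
    rw [← Finset.card_biUnion hdisj, ← Finset.card_union_of_disjoint hRdisj]
    have hsubK : R ∪ (Finset.Icc 1 n).biUnion cov ⊆ Finset.Icc 1 K := by
      intro r hr
      rw [Finset.mem_union] at hr
      rcases hr with hr | hr
      · rw [hRdef] at hr; simp only [Finset.mem_filter] at hr; exact hr.1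
      · rw [Finset.mem_biUnion] at hr
        obtain ⟨i, _, hri⟩ := hr
        rw [hcovdef, Finset.mem_filter] at hri; exact hri.1
    calc (R ∪ (Finset.Icc 1 n).biUnion cov).card ≤ (Finset.Icc 1 K).card :=
        Finset.card_le_card hsubK
    _ = K := by rw [Nat.card_Icc]; omega
  have hsum2 : ∑ i ∈ Finset.Icc 1 n, K / (k i : ℕ) ≤
      ∑ i ∈ Finset.Icc 1 n, (cov i).card := Finset.sum_le_sum hcard
  -- real arithmetic
  have hK0 : (0 : ℝ) < (K : ℝ) := by exact_mod_cast hKpos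
  have hdivcast : ∀ i ∈ Finset.Icc 1 n,
      ((K / (k i : ℕ) : ℕ) : ℝ) = (K : ℝ) * ((k i : ℕ) : ℝ)⁻¹ := by
    intro i hi
    have hiIcc' := Finset.mem_Icc.1 hi
    have hki : (k i : ℕ) ∣ K := hchain i n hiIcc'.1 hiIcc'.2
    have hkne : ((k i : ℕ) : ℝ) ≠ 0 := by
      have := (k i).pos; positivity
    rw [Nat.cast_div hki hkne, div_eq_mul_inv]
  have h2 : (R.card : ℝ) + ∑ i ∈ Finset.Icc 1 n, (K : ℝ) * ((k i : ℕ) : ℝ)⁻¹ ≤ (K : ℝ) := by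
    have e1 : ∑ i ∈ Finset.Icc 1 n, (K : ℝ) * ((k i : ℕ) : ℝ)⁻¹
        = ∑ i ∈ Finset.Icc 1 n, ((K / (k i : ℕ) : ℕ) : ℝ) :=
      (Finset.sum_congr rfl hdivcast).symm
    rw [e1, ← Nat.cast_sum, ← Nat.cast_add]
    exact_mod_cast le_trans (by omega : R.card + ∑ i ∈ Finset.Icc 1 n, K / (k i : ℕ)
      ≤ R.card + ∑ i ∈ Finset.Icc 1 n, (cov i).card) htot
  set S : ℝ := ∑ i ∈ Finset.Icc 1 n, ((k i : ℕ) : ℝ)⁻¹ with hSdef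
  have hS : ∑ i ∈ Finset.Icc 1 n, (K : ℝ) * ((k i : ℕ) : ℝ)⁻¹ = (K : ℝ) * S := by
    rw [hSdef, Finset.mul_sum]
  have h2' : (R.card : ℝ) ≤ (K : ℝ) * (1 - S) := by
    rw [hS] at h2
    have : (K : ℝ) * (1 - S) = K - K * S := by ring
    linarith
  have h3 : (R.card : ℝ) * (K : ℝ)⁻¹ ≤ 1 - S := by
    have := mul_le_mul_of_nonneg_right h2' (le_of_lt (inv_pos.2 hK0))
    have heq : (K : ℝ) * (1 - S) * (K : ℝ)⁻¹ = 1 - S := by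
      field_simp
    linarith [heq ▸ this]
  have h1 : (1 : ℝ) ≤ μ U + μ Uᶜ := by
    have := hsub U Uᶜ
    rw [Set.union_compl_self, huniv] at this
    linarith
  have hlow : S ≤ μ U := by
    have : μ Uᶜ ≤ 1 - S := le_trans hc1 h3
    linarith
  exact le_antisymm hub hlow
end

section
/- Let μ* : 𝒫(ℕ⁺) → ℝ be an upper quasi-density (μ*(ℕ⁺) = 1, μ* ≤ 1, subadditive, and μ*(k·X + h) = (1/k)μ*(X) for all positive h, k). If X ⊆ Y ⊆ ℕ⁺ and Y differs from a finite union of arithmetic progressions of ℕ⁺ by finitely many elements, then μ*(X) ≤ μ*(Y). (Monotonicity holds when the larger set is eventually periodic, even without assuming monotonicity of μ*.) -/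
def APs (k h : ℕ) : Set ℕ+ := {x : ℕ+ | ∃ m : ℕ+, (x : ℕ) = k * (m : ℕ) + h}

lemma AP_range (K r : ℕ+) :
    APs (K : ℕ) (r : ℕ) = Set.range (fun x : ℕ+ => K * x + r) := by
  ext x
  simp only [APs, Set.mem_setOf_eq, Set.mem_range]
  constructor
  · rintro ⟨m, hm⟩
    refine ⟨m, PNat.coe_injective ?_⟩
    simp [← hm]
  · rintro ⟨m, rfl⟩
    exact ⟨m, by simp⟩

lemma rep_decomp (K s : ℕ) (_hK : 0 < K) (hs : 0 < s) :
    s = K * ((s - 1) / K) + ((s - 1) % K + 1) := by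
  have h := Nat.div_add_mod (s - 1) K
  omega

lemma bdd_finite (B : ℕ) : {x : ℕ+ | (x : ℕ) ≤ B}.Finite := by
  have h : {x : ℕ+ | (x : ℕ) ≤ B} = ((↑) : ℕ+ → ℕ) ⁻¹' (Set.Iic B) := rfl
  rw [h]
  exact Set.Finite.preimage (PNat.coe_injective.injOn) (Set.finite_Iic B)

section
variable (μ : Set ℕ+ → ℝ)
    (hle : ∀ X : Set ℕ+, μ X ≤ 1)
    (hsub : ∀ X Y : Set ℕ+, μ (X ∪ Y) ≤ μ X + μ Y)
    (hhom : ∀ (X : Set ℕ+) (h k : ℕ+),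
      μ ((fun x => k * x + h) '' X) = ((k : ℕ) : ℝ)⁻¹ * μ X)

include hhom

lemma mu_empty_s7 : μ ∅ = 0 := by
  have h := hhom ∅ 1 2
  simp only [Set.image_empty] at h
  have h2 : ((2:ℕ+):ℕ) = 2 := rfl
  rw [h2] at h
  push_cast at h
  linarith

lemma mu_singleton (a : ℕ+) : μ {a} = 0 := by
  have key : ∀ b : ℕ+, μ {1 + b} = μ {1} := by
    intro b
    have h := hhom {1} b 1
    simp only [Set.image_singleton, mul_one, one_mul] at h
    simpa using h
  have h1 : μ {(1:ℕ+)} = 0 := by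
    have c3 : μ {(1:ℕ+) + 2} = μ {1} := key 2
    have c3' := hhom {1} 1 2
    simp only [Set.image_singleton, mul_one] at c3'
    have e : (2 + 1 : ℕ+) = 1 + 2 := rfl
    rw [e] at c3'
    have h2 : ((2:ℕ+):ℕ) = 2 := rfl
    rw [h2] at c3'
    push_cast at c3'
    rw [c3] at c3'
    linarith
  by_cases ha : a = 1
  · rw [ha]; exact h1
  · obtain ⟨b, rfl⟩ := PNat.exists_eq_succ_of_ne_one ha
    rw [add_comm, key b]; exact h1

include hsub

lemma mu_biUnion {ι : Type*} [DecidableEq ι] (s : Finset ι) (A : ι → Set ℕ+) :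
    μ (⋃ i ∈ s, A i) ≤ ∑ i ∈ s, μ (A i) := by
  induction s using Finset.induction_on with
  | empty => simp [mu_empty_s7 μ hhom]
  | insert _ _ h ih =>
      rw [Finset.set_biUnion_insert, Finset.sum_insert h]
      exact le_trans (hsub _ _) (by linarith)

lemma mu_finite_le {F : Set ℕ+} (hF : F.Finite) : μ F ≤ 0 := by
  have h : F = ⋃ a ∈ hF.toFinset, {a} := by simp
  rw [h]
  calc μ (⋃ a ∈ hF.toFinset, {a}) ≤ ∑ a ∈ hF.toFinset, μ {a} :=
        mu_biUnion μ hsub hhom _ _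
    _ = 0 := by simp [mu_singleton μ hhom]

include hle

omit hsub in
lemma mu_sub_range (k h : ℕ+) (S : Set ℕ+)
    (hS : S ⊆ Set.range (fun x : ℕ+ => k * x + h)) : μ S ≤ ((k:ℕ) : ℝ)⁻¹ := by
  have him : (fun x : ℕ+ => k * x + h) '' ((fun x : ℕ+ => k * x + h) ⁻¹' S) = S :=
    Set.image_preimage_eq_of_subset hS
  have h2 := hhom ((fun x : ℕ+ => k * x + h) ⁻¹' S) h k
  rw [him] at h2
  rw [h2]
  have hk : (0:ℝ) ≤ ((k:ℕ):ℝ)⁻¹ := by positivity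
  calc ((k:ℕ):ℝ)⁻¹ * μ _ ≤ ((k:ℕ):ℝ)⁻¹ * 1 := mul_le_mul_of_nonneg_left (hle _) hk
    _ = _ := mul_one _

end

theorem stmt7 (μ : Set ℕ+ → ℝ)
    (huniv : μ Set.univ = 1) (hle : ∀ X : Set ℕ+, μ X ≤ 1)
    (hsub : ∀ X Y : Set ℕ+, μ (X ∪ Y) ≤ μ X + μ Y)
    (hhom : ∀ (X : Set ℕ+) (h k : ℕ+),
      μ ((fun x => k * x + h) '' X) = ((k : ℕ) : ℝ)⁻¹ * μ X)
    (X Y : Set ℕ+) (hXY : X ⊆ Y)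
    (hY : ∃ (n : ℕ) (ks : Fin n → ℕ+) (hs : Fin n → ℕ),
      ((Y \ (⋃ i : Fin n, {x : ℕ+ | ∃ m : ℕ+, (x : ℕ) = (ks i : ℕ) * (m : ℕ) + hs i})) ∪
       ((⋃ i : Fin n, {x : ℕ+ | ∃ m : ℕ+, (x : ℕ) = (ks i : ℕ) * (m : ℕ) + hs i}) \ Y)).Finite) :
    μ X ≤ μ Y := by
  classical
  obtain ⟨n, ks, hs, hfin⟩ := hY
  set U : Set ℕ+ :=
    ⋃ i : Fin n, {x : ℕ+ | ∃ m : ℕ+, (x : ℕ) = (ks i : ℕ) * (m : ℕ) + hs i} with hU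
  have hUAP : U = ⋃ i : Fin n, APs (ks i) (hs i) := rfl
  set K : ℕ := ∏ i : Fin n, (ks i : ℕ) with hKdef
  have hK : 0 < K := Finset.prod_pos (fun i _ => (ks i).pos)
  have hdvd : ∀ i, (ks i : ℕ) ∣ K := fun i => Finset.dvd_prod_of_mem _ (Finset.mem_univ i)
  have hkle : ∀ i, (ks i : ℕ) ≤ K := fun i => Nat.le_of_dvd hK (hdvd i)
  set H : ℕ := Finset.univ.sup hs with hHdef
  set B : ℕ := K * K + H + K with hBdef
  set low : Set ℕ+ := {x : ℕ+ | (x : ℕ) ≤ B} with hlowdef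
  have hlowfin : low.Finite := bdd_finite B
  set R : Finset ℕ := (Finset.univ ×ˢ Finset.range K).image
      (fun p : Fin n × ℕ => ((ks p.1 : ℕ) * (p.2 + 1) + hs p.1 - 1) % K + 1) with hRdef
  have hRIcc : R ⊆ Finset.Icc 1 K := by
    intro r hr
    simp only [hRdef, Finset.mem_image] at hr
    obtain ⟨p, _, hp⟩ := hr
    have hmod := Nat.mod_lt ((ks p.1 : ℕ) * (p.2 + 1) + hs p.1 - 1) hK
    simp only [Finset.mem_Icc]
    omega
  -- Claim B : each class from R is inside U up to a bounded set
  have claimB : ∀ r ∈ R, APs K r ⊆ U ∪ low := by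
    intro r hr x hx
    simp only [hRdef, Finset.mem_image] at hr
    obtain ⟨⟨i, j⟩, hpmem, hrep⟩ := hr
    simp only [Finset.mem_product, Finset.mem_univ, true_and, Finset.mem_range] at hpmem
    set s : ℕ := (ks i : ℕ) * (j + 1) + hs i with hsdef
    have hspos : 0 < s := by positivity
    set d : ℕ := (s - 1) / K with hddef
    have hsd : s = K * d + r := by
      have hdec := rep_decomp K s hK hspos
      rw [← hddef] at hdec
      omega
    obtain ⟨m, hm⟩ := hx
    by_cases hmd : d < (m : ℕ)
    · obtain ⟨e, he⟩ := Nat.exists_eq_add_of_lt hmd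
      set q : ℕ := K / (ks i : ℕ) with hqdef
      have hKq : (ks i : ℕ) * q = K := Nat.mul_div_cancel' (hdvd i)
      left
      rw [hUAP]
      refine Set.mem_iUnion.2 ⟨i, ⟨⟨(j+1) + q*(e+1), by positivity⟩, ?_⟩⟩
      show (x : ℕ) = (ks i : ℕ) * ((j+1) + q*(e+1)) + hs i
      calc (x:ℕ) = K * (m:ℕ) + r := hm
        _ = (K * d + r) + K * (e+1) := by rw [he]; ring
        _ = ((ks i:ℕ) * (j+1) + hs i) + ((ks i:ℕ) * q) * (e+1) := by
              rw [← hsd, hKq, hsdef]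
        _ = (ks i:ℕ) * ((j+1) + q*(e+1)) + hs i := by ring
    · right
      show (x:ℕ) ≤ B
      have h1 : K * (m:ℕ) ≤ K * d := Nat.mul_le_mul_left K (by omega)
      have h2 : (ks i:ℕ) * (j+1) ≤ K * K := Nat.mul_le_mul (hkle i) (by omega)
      have h3 : hs i ≤ H := Finset.le_sup (Finset.mem_univ i)
      calc (x:ℕ) = K * (m:ℕ) + r := hm
        _ ≤ K * d + r := Nat.add_le_add_right h1 r
        _ = s := hsd.symm
        _ ≤ K * K + H := by rw [hsdef]; exact Nat.add_le_add h2 h3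
        _ ≤ B := Nat.le_add_right _ _
  -- Claim C : U is covered by the classes from R up to a bounded set
  have claimC : U ⊆ (⋃ r ∈ R, APs K r) ∪ low := by
    rw [hUAP]
    intro x hx
    obtain ⟨i, hxi⟩ := Set.mem_iUnion.1 hx
    obtain ⟨m, hm⟩ := hxi
    set q : ℕ := K / (ks i : ℕ) with hqdef
    have hKq : (ks i : ℕ) * q = K := Nat.mul_div_cancel' (hdvd i)
    have hqpos : 0 < q := by
      rcases Nat.eq_zero_or_pos q with h0 | h0
      · rw [h0, mul_zero] at hKq; omega
      · exact h0
    have hqK : q ≤ K := by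
      calc q = 1 * q := (one_mul q).symm
        _ ≤ (ks i : ℕ) * q := Nat.mul_le_mul_right q (ks i).one_le
        _ = K := hKq
    set t : ℕ := ((m:ℕ) - 1) / q with htdef
    set j' : ℕ := ((m:ℕ) - 1) % q with hjdef
    have hj' : j' < q := Nat.mod_lt _ hqpos
    have hmdec : (m:ℕ) = q * t + j' + 1 := by
      have hdm := Nat.div_add_mod ((m:ℕ) - 1) q
      rw [← htdef, ← hjdef] at hdm
      have hm1 : 1 ≤ (m:ℕ) := m.one_le
      omega
    set s : ℕ := (ks i:ℕ) * (j' + 1) + hs i with hsdef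
    have hspos : 0 < s := by positivity
    set d : ℕ := (s - 1) / K with hddef
    set r : ℕ := (s - 1) % K + 1 with hrdef
    have hsd : s = K * d + r := rep_decomp K s hK hspos
    have hrR : r ∈ R := by
      rw [hRdef]
      refine Finset.mem_image.2 ⟨(i, j'), ?_, rfl⟩
      simp only [Finset.mem_product, Finset.mem_univ, true_and, Finset.mem_range]
      omega
    have hx2 : (x:ℕ) = K * (t + d) + r := by
      calc (x:ℕ) = (ks i:ℕ) * (m:ℕ) + hs i := hm
        _ = (ks i:ℕ) * (q*t + j' + 1) + hs i := by rw [hmdec]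
        _ = ((ks i:ℕ) * q) * t + s := by rw [hsdef]; ring
        _ = K * t + (K * d + r) := by rw [hKq, ← hsd]
        _ = K * (t + d) + r := by ring
    rcases Nat.eq_zero_or_pos (t + d) with h0 | h0
    · right
      show (x:ℕ) ≤ B
      have hxr : (x:ℕ) = r := by rw [hx2, h0, Nat.mul_zero, Nat.zero_add]
      have hrK : r ≤ K := by
        have := Nat.mod_lt (s - 1) hK
        omega
      calc (x:ℕ) = r := hxr
        _ ≤ K := hrK
        _ ≤ B := Nat.le_add_left _ _
    · left
      exact Set.mem_iUnion₂.2 ⟨r, hrR, ⟨⟨t + d, h0⟩, hx2⟩⟩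
  -- Claim D : every large element is in some class mod K
  have claimD : ∀ x : ℕ+, K < (x:ℕ) → ∃ r ∈ Finset.Icc 1 K, x ∈ APs K r := by
    intro x hxK
    refine ⟨((x:ℕ) - 1) % K + 1, ?_, ?_⟩
    · have := Nat.mod_lt ((x:ℕ) - 1) hK
      simp only [Finset.mem_Icc]
      omega
    · have hdec := rep_decomp K (x:ℕ) hK x.pos
      exact ⟨⟨((x:ℕ) - 1)/K, Nat.div_pos (by omega) hK⟩, hdec⟩
  -- measure of subsets of classes
  have hmuAPle : ∀ r ∈ Finset.Icc 1 K, ∀ S : Set ℕ+, S ⊆ APs K r → μ S ≤ ((K:ℕ):ℝ)⁻¹ := by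
    intro r hr S hS
    have hrpos : 0 < r := (Finset.mem_Icc.1 hr).1
    exact mu_sub_range μ hle hhom ⟨K, hK⟩ ⟨r, hrpos⟩ S (hS.trans (AP_range ⟨K, hK⟩ ⟨r, hrpos⟩).le)
  have hYUfin : (Y \ U).Finite := hfin.subset Set.subset_union_left
  have hUYfin : (U \ Y).Finite := hfin.subset Set.subset_union_right
  -- upper bound for μ X
  have hXdec : X = (⋃ r ∈ R, X ∩ APs K r) ∪ (X ∩ ((Y \ U) ∪ low)) := by
    apply Set.Subset.antisymm
    · intro x hx
      have hxY := hXY hx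
      by_cases hxU : x ∈ U
      · rcases claimC hxU with h | h
        · obtain ⟨r, hr, hAP⟩ := Set.mem_iUnion₂.1 h
          exact Or.inl (Set.mem_iUnion₂.2 ⟨r, hr, ⟨hx, hAP⟩⟩)
        · exact Or.inr ⟨hx, Or.inr h⟩
      · exact Or.inr ⟨hx, Or.inl ⟨hxY, hxU⟩⟩
    · rintro x (hx | hx)
      · obtain ⟨r, _, hxr⟩ := Set.mem_iUnion₂.1 hx
        exact hxr.1
      · exact hx.1
  have hmufinX : μ (X ∩ ((Y \ U) ∪ low)) ≤ 0 :=
    mu_finite_le μ hsub hhom ((hYUfin.union hlowfin).subset Set.inter_subset_right)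
  have hmuX : μ X ≤ (R.card : ℝ) * ((K:ℕ):ℝ)⁻¹ := by
    calc μ X = μ ((⋃ r ∈ R, X ∩ APs K r) ∪ (X ∩ ((Y \ U) ∪ low))) := by rw [← hXdec]
      _ ≤ μ (⋃ r ∈ R, X ∩ APs K r) + μ (X ∩ ((Y \ U) ∪ low)) := hsub _ _
      _ ≤ (∑ r ∈ R, μ (X ∩ APs K r)) + 0 :=
            add_le_add (mu_biUnion μ hsub hhom R _) hmufinX
      _ ≤ (∑ r ∈ R, ((K:ℕ):ℝ)⁻¹) + 0 := by
            gcongr with r hr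
            exact hmuAPle r (hRIcc hr) _ Set.inter_subset_right
      _ = (R.card : ℝ) * ((K:ℕ):ℝ)⁻¹ := by
            rw [Finset.sum_const, nsmul_eq_mul, add_zero]
  -- lower bound for μ Y
  have hunivdec : (Set.univ : Set ℕ+) =
      Y ∪ ((⋃ r ∈ Finset.Icc 1 K \ R, APs K r) ∪ ((U \ Y) ∪ low)) := by
    apply Set.Subset.antisymm _ (Set.subset_univ _)
    intro x _
    by_cases hxB : (x:ℕ) ≤ K
    · exact Or.inr (Or.inr (Or.inr (le_trans hxB (Nat.le_add_left _ _))))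
    · obtain ⟨r, hr, hxr⟩ := claimD x (by omega)
      by_cases hrR : r ∈ R
      · rcases claimB r hrR hxr with hU2 | hlow2
        · by_cases hxY : x ∈ Y
          · exact Or.inl hxY
          · exact Or.inr (Or.inr (Or.inl ⟨hU2, hxY⟩))
        · exact Or.inr (Or.inr (Or.inr hlow2))
      · exact Or.inr (Or.inl (Set.mem_iUnion₂.2 ⟨r, Finset.mem_sdiff.2 ⟨hr, hrR⟩, hxr⟩))
  have hmufinY : μ ((U \ Y) ∪ low) ≤ 0 :=
    mu_finite_le μ hsub hhom (hUYfin.union hlowfin)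
  have hRK : R.card ≤ K := by
    have := Finset.card_le_card hRIcc
    rwa [Nat.card_Icc, Nat.add_sub_cancel] at this
  have hcard : ((Finset.Icc 1 K \ R).card : ℝ) = (K : ℝ) - (R.card : ℝ) := by
    rw [Finset.card_sdiff_of_subset hRIcc, Nat.card_Icc, Nat.add_sub_cancel]
    push_cast [Nat.cast_sub hRK]
    ring
  have hmuY : (1:ℝ) ≤ μ Y + ((K:ℝ) - (R.card:ℝ)) * ((K:ℕ):ℝ)⁻¹ := by
    calc (1:ℝ) = μ Set.univ := huniv.symm
      _ = μ (Y ∪ ((⋃ r ∈ Finset.Icc 1 K \ R, APs K r) ∪ ((U \ Y) ∪ low))) := by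
            rw [← hunivdec]
      _ ≤ μ Y + μ ((⋃ r ∈ Finset.Icc 1 K \ R, APs K r) ∪ ((U \ Y) ∪ low)) := hsub _ _
      _ ≤ μ Y + (μ (⋃ r ∈ Finset.Icc 1 K \ R, APs K r) + μ ((U \ Y) ∪ low)) := by
            have := hsub (⋃ r ∈ Finset.Icc 1 K \ R, APs K r) ((U \ Y) ∪ low)
            linarith
      _ ≤ μ Y + ((∑ r ∈ Finset.Icc 1 K \ R, μ (APs K r)) + 0) := by
            have h1 := mu_biUnion μ hsub hhom (Finset.Icc 1 K \ R) (fun r => APs K r)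
            linarith
      _ ≤ μ Y + ((∑ r ∈ Finset.Icc 1 K \ R, ((K:ℕ):ℝ)⁻¹) + 0) := by
            have h2 : ∀ r ∈ Finset.Icc 1 K \ R, μ (APs K r) ≤ ((K:ℕ):ℝ)⁻¹ := fun r hr =>
              hmuAPle r (Finset.mem_sdiff.1 hr).1 _ le_rfl
            have := Finset.sum_le_sum h2
            linarith
      _ = μ Y + ((K:ℝ) - (R.card:ℝ)) * ((K:ℕ):ℝ)⁻¹ := by
            rw [Finset.sum_const, nsmul_eq_mul, add_zero, hcard]
  have hKpos : (0:ℝ) < (K:ℝ) := by exact_mod_cast hK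
  have h1 : (K:ℝ) * ((K:ℕ):ℝ)⁻¹ = 1 := mul_inv_cancel₀ (ne_of_gt hKpos)
  have hmuY' : (R.card : ℝ) * ((K:ℕ):ℝ)⁻¹ ≤ μ Y := by
    rw [sub_mul, h1] at hmuY
    linarith
  linarith
end

section
/- Let (aₙ)ₙ≥1 and (bₙ)ₙ≥1 be sequences of positive reals such that aₙ + 1 ≤ bₙ < aₙ₊₁ for all sufficiently large n, aₙ/bₙ → ℓ, and bₙ/aₙ₊₁ → 0. Fix k ∈ ℕ⁺ and h ∈ ℤ, and let X := (⋃ₙ {m ∈ ℕ : aₙ + 1 ≤ m ≤ bₙ}) ∩ (k·ℤ + h) ∩ ℕ⁺. Then the upper asymptotic density of X equals (1 − ℓ)/k and the lower asymptotic density of X equals 0. -/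
open Filter Set

noncomputable def dUpper (X : Set ℕ) : ℝ :=
  Filter.limsup (fun n : ℕ => ((X ∩ Set.Icc 1 n).ncard : ℝ) / n) Filter.atTop

noncomputable def dLower (X : Set ℕ) : ℝ :=
  Filter.liminf (fun n : ℕ => ((X ∩ Set.Icc 1 n).ncard : ℝ) / n) Filter.atTop

section helpers

lemma le_of_forall_pos_le_add' {x y : ℝ} (hc : ∀ ε : ℝ, 0 < ε → x ≤ y + ε) : x ≤ y := by
  by_contra hxy
  push_neg at hxy
  have := hc ((x - y)/2) (by linarith)
  linarith

lemma ap_finite (y : ℝ) : {m : ℕ | (m:ℝ) ≤ y}.Finite := by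
  apply (Set.finite_Iic ⌊y⌋₊).subset
  intro m hm
  exact Nat.le_floor hm


lemma ap_count_upper (k : ℕ+) (h : ℤ) (x y : ℝ) :
    (({m : ℕ | x < (m:ℝ) ∧ (m:ℝ) ≤ y ∧ ∃ t : ℤ, (m:ℤ) = ((k:ℕ):ℤ) * t + h}).ncard : ℝ)
      ≤ max (y - x) 0 / ((k:ℕ):ℝ) + 1 := by
  set K : ℝ := ((k:ℕ):ℝ) with hKdef
  have hK : (0:ℝ) < K := by positivity
  set A : Finset ℤ := Finset.Ioc ⌊(x - h)/K⌋ ⌊(y - h)/K⌋ with hA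
  have hsub : {m : ℕ | x < (m:ℝ) ∧ (m:ℝ) ≤ y ∧ ∃ t : ℤ, (m:ℤ) = ((k:ℕ):ℤ) * t + h}
      ⊆ ↑(A.image fun t => (((k:ℕ):ℤ) * t + h).toNat) := by
    rintro m ⟨hxm, hmy, t, ht⟩
    have hmr : (m:ℝ) = K * t + h := by
      have := congrArg (fun z : ℤ => (z : ℝ)) ht
      push_cast at this
      exact this
    refine Finset.mem_coe.mpr (Finset.mem_image.mpr ⟨t, Finset.mem_Ioc.mpr ⟨?_, ?_⟩, ?_⟩)
    · rw [Int.floor_lt, div_lt_iff₀ hK]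
      nlinarith [hxm, hmr]
    · rw [Int.le_floor, le_div_iff₀ hK]
      nlinarith [hmy, hmr]
    · rw [← ht]; exact Int.toNat_natCast m
  have hfin : (↑(A.image fun t => (((k:ℕ):ℤ) * t + h).toNat) : Set ℕ).Finite :=
    (A.image _).finite_toSet
  have h1 : ({m : ℕ | x < (m:ℝ) ∧ (m:ℝ) ≤ y ∧ ∃ t : ℤ, (m:ℤ) = ((k:ℕ):ℤ) * t + h}).ncard
      ≤ A.card := by
    calc _ ≤ (↑(A.image fun t => (((k:ℕ):ℤ) * t + h).toNat) : Set ℕ).ncard :=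
          Set.ncard_le_ncard hsub hfin
      _ = (A.image fun t => (((k:ℕ):ℤ) * t + h).toNat).card := Set.ncard_coe_finset _
      _ ≤ A.card := Finset.card_image_le
  have h2 : ((A.card : ℕ) : ℝ) ≤ max (y - x) 0 / K + 1 := by
    rw [hA, Int.card_Ioc]
    set u : ℤ := ⌊(y - h)/K⌋ - ⌊(x - h)/K⌋ with hu
    clear_value u
    have hrhs : (0:ℝ) ≤ max (y - x) 0 / K + 1 := by positivity
    rcases le_or_gt u 0 with hu0 | hu0
    · rw [Int.toNat_of_nonpos hu0]; simpa using hrhs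
    · have hcst : ((u.toNat : ℕ) : ℝ) = (u : ℝ) := by
        exact_mod_cast Int.toNat_of_nonneg hu0.le
      rw [hcst]
      have e1 : ((⌊(y - h)/K⌋ : ℤ) : ℝ) ≤ (y - h)/K := Int.floor_le _
      have e2 : (x - h)/K - 1 < ((⌊(x - h)/K⌋ : ℤ) : ℝ) := Int.sub_one_lt_floor _
      have : (u : ℝ) ≤ (y - x)/K + 1 := by
        push_cast [hu]
        have : (y - h)/K - ((x-h)/K - 1) = (y - x)/K + 1 := by ring
        linarith
      have hle : (y - x)/K ≤ max (y - x) 0 / K := by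
        gcongr
        exact le_max_left _ _
      linarith
  calc ((_ : ℕ) : ℝ) ≤ (A.card : ℝ) := by exact_mod_cast h1
    _ ≤ _ := h2

lemma ap_count_lower (k : ℕ+) (h : ℤ) (x y : ℝ) (hx : 0 ≤ x) :
    (y - x) / ((k:ℕ):ℝ) - 1 ≤
    (({m : ℕ | x < (m:ℝ) ∧ (m:ℝ) ≤ y ∧ ∃ t : ℤ, (m:ℤ) = ((k:ℕ):ℤ) * t + h}).ncard : ℝ) := by
  set K : ℝ := ((k:ℕ):ℝ) with hKdef
  have hK : (0:ℝ) < K := by positivity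
  set S := {m : ℕ | x < (m:ℝ) ∧ (m:ℝ) ≤ y ∧ ∃ t : ℤ, (m:ℤ) = ((k:ℕ):ℤ) * t + h} with hS
  have hSfin : S.Finite := (ap_finite y).subset (fun m hm => hm.2.1)
  set A : Finset ℤ := Finset.Ioc ⌊(x - h)/K⌋ ⌊(y - h)/K⌋ with hA
  have key : ∀ t ∈ A, (0:ℤ) < ((k:ℕ):ℤ) * t + h ∧ x < (((((k:ℕ):ℤ) * t + h).toNat : ℕ) : ℝ)
      ∧ ((((((k:ℕ):ℤ) * t + h).toNat : ℕ)) : ℝ) ≤ y := by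
    intro t ht
    rw [hA, Finset.mem_Ioc] at ht
    have h1 : (x - h)/K < (t:ℝ) := Int.floor_lt.mp ht.1
    have h2 : (t:ℝ) ≤ (y - h)/K := Int.le_floor.mp ht.2
    rw [div_lt_iff₀ hK] at h1
    rw [le_div_iff₀ hK] at h2
    have hxlt : x < K * t + h := by linarith [mul_comm (t:ℝ) K]
    have hyge : K * t + h ≤ y := by linarith [mul_comm (t:ℝ) K]
    have hpos : (0:ℤ) < ((k:ℕ):ℤ) * t + h := by
      have h0 : (0:ℝ) < K * t + h := lt_of_le_of_lt hx hxlt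
      rw [hKdef] at h0
      exact_mod_cast h0
    have hcast : (((((k:ℕ):ℤ) * t + h).toNat : ℕ) : ℝ) = K * t + h := by
      have h1 := congrArg (fun z : ℤ => (z : ℝ)) (Int.toNat_of_nonneg hpos.le)
      push_cast at h1
      rw [hKdef]
      push_cast
      linarith
    exact ⟨hpos, by rw [hcast]; exact hxlt, by rw [hcast]; exact hyge⟩
  have hsub : ↑(A.image fun t => (((k:ℕ):ℤ) * t + h).toNat) ⊆ S := by
    intro m hm
    simp only [Finset.coe_image, Set.mem_image, Finset.mem_coe] at hm
    obtain ⟨t, ht, rfl⟩ := hm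
    obtain ⟨hpos, hlt, hle⟩ := key t ht
    exact ⟨hlt, hle, t, by rw [Int.toNat_of_nonneg hpos.le]⟩
  have hinj : Set.InjOn (fun t => (((k:ℕ):ℤ) * t + h).toNat) A := by
    intro t1 h1 t2 h2 he
    have p1 := (key t1 h1).1
    have p2 := (key t2 h2).1
    simp only at he
    have : ((k:ℕ):ℤ) * t1 + h = ((k:ℕ):ℤ) * t2 + h := by
      rw [← Int.toNat_of_nonneg p1.le, ← Int.toNat_of_nonneg p2.le, he]
    have hk0 : ((k:ℕ):ℤ) ≠ 0 := by exact_mod_cast k.ne_zero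
    have := add_right_cancel this
    exact mul_left_cancel₀ hk0 this
  have h1 : A.card ≤ S.ncard := by
    rw [← Finset.card_image_of_injOn hinj, ← Set.ncard_coe_finset]
    exact Set.ncard_le_ncard hsub hSfin
  have h2 : (y - x)/K - 1 ≤ (A.card : ℝ) := by
    rw [hA, Int.card_Ioc]
    have e1 : (y - h)/K - 1 < ((⌊(y - h)/K⌋ : ℤ) : ℝ) := Int.sub_one_lt_floor _
    have e2 : ((⌊(x - h)/K⌋ : ℤ) : ℝ) ≤ (x - h)/K := Int.floor_le _
    have e3 : ((⌊(y - h)/K⌋ - ⌊(x - h)/K⌋ : ℤ) : ℝ) ≤ (((⌊(y - h)/K⌋ - ⌊(x - h)/K⌋).toNat : ℕ) : ℝ) := by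
      exact_mod_cast Int.self_le_toNat _
    have : (y - x)/K - 1 ≤ ((⌊(y - h)/K⌋ - ⌊(x - h)/K⌋ : ℤ) : ℝ) := by
      push_cast
      have : (y - h)/K - 1 - (x - h)/K = (y-x)/K - 1 := by ring
      linarith
    linarith
  calc (y - x)/K - 1 ≤ (A.card : ℝ) := h2
    _ ≤ (S.ncard : ℝ) := by exact_mod_cast h1

end helpers

theorem stmt10 (a b : ℕ → ℝ) (ℓ : ℝ)
    (hpos : ∀ n, 0 < a n ∧ 0 < b n)
    (hev : ∀ᶠ n in Filter.atTop, a n + 1 ≤ b n ∧ b n < a (n + 1))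
    (hab : Filter.Tendsto (fun n => a n / b n) Filter.atTop (nhds ℓ))
    (hba : Filter.Tendsto (fun n => b n / a (n + 1)) Filter.atTop (nhds 0))
    (k : ℕ+) (h : ℤ) :
    dUpper {m : ℕ | 0 < m ∧ (∃ n, a n + 1 ≤ (m : ℝ) ∧ (m : ℝ) ≤ b n) ∧
        ∃ x : ℤ, (m : ℤ) = ((k : ℕ) : ℤ) * x + h} = (1 - ℓ) / ((k : ℕ) : ℝ) ∧
    dLower {m : ℕ | 0 < m ∧ (∃ n, a n + 1 ≤ (m : ℝ) ∧ (m : ℝ) ≤ b n) ∧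
        ∃ x : ℤ, (m : ℤ) = ((k : ℕ) : ℤ) * x + h} = 0 := by
  have hK : (0:ℝ) < ((k:ℕ):ℝ) := by positivity
  have hK1 : (1:ℝ) ≤ ((k:ℕ):ℝ) := by exact_mod_cast k.one_le
  set K : ℝ := ((k:ℕ):ℝ) with hKdef
  set L : ℝ := (1 - ℓ) / K with hLdef
  set X : Set ℕ := {m : ℕ | 0 < m ∧ (∃ n, a n + 1 ≤ (m : ℝ) ∧ (m : ℝ) ≤ b n) ∧
      ∃ x : ℤ, (m : ℤ) = ((k : ℕ) : ℤ) * x + h} with hXdef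
  set f : ℕ → ℝ := fun N => (((X ∩ Set.Icc 1 N).ncard : ℕ) : ℝ) / N with hfdef
  -- basic positivity
  have hapos : ∀ n, 0 < a n := fun n => (hpos n).1
  have hbpos : ∀ n, 0 < b n := fun n => (hpos n).2
  obtain ⟨n₀, hn₀⟩ := eventually_atTop.mp hev
  -- monotonicity facts
  have ha_gap : ∀ n j, n₀ ≤ n → a n + j ≤ a (n + j) := by
    intro n j hn
    induction j with
    | zero => simp
    | succ j ih =>
      have hj := hn₀ (n + j) (le_trans hn (Nat.le_add_right _ _))
      have : a (n + j) + 1 ≤ a (n + j + 1) := by linarith [hj.1, hj.2]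
      push_cast
      push_cast at ih
      have : (n:ℕ) + (j+1) = (n + j) + 1 := by omega
      rw [this]
      linarith
  have hamono : ∀ m n, n₀ ≤ m → m ≤ n → a m ≤ a n := by
    intro m n hm hmn
    have h1 := ha_gap m (n - m) hm
    rw [Nat.add_sub_cancel' hmn] at h1
    have h2 : (0:ℝ) ≤ ((n - m : ℕ) : ℝ) := Nat.cast_nonneg _
    linarith
  have hale : ∀ n, n₀ ≤ n → a n + 1 ≤ b n := fun n hn => (hn₀ n hn).1
  have hblt : ∀ n, n₀ ≤ n → b n < a (n+1) := fun n hn => (hn₀ n hn).2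
  have hbmono : ∀ m n, n₀ ≤ m → m ≤ n → b m ≤ b n := by
    intro m n hm hmn
    rcases eq_or_lt_of_le hmn with rfl | hlt
    · exact le_rfl
    · have h1 : b m < a (m+1) := hblt m hm
      have h2 : a (m+1) ≤ a n := hamono (m+1) n (by omega) (by omega)
      have h3 : a n + 1 ≤ b n := hale n (by omega)
      linarith
  have hba2 : ∀ m n, n₀ ≤ m → m < n → b m ≤ a n := by
    intro m n hm hmn
    have h1 : b m < a (m+1) := hblt m hm
    have h2 : a (m+1) ≤ a n := hamono (m+1) n (by omega) (by omega)
    linarith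
  -- a and b tend to infinity
  have ha_top : Tendsto a atTop atTop := by
    refine tendsto_atTop_mono' atTop (f₁ := fun n => a n₀ + ((n - n₀ : ℕ) : ℝ)) ?_ ?_
    · filter_upwards [eventually_ge_atTop n₀] with n hn
      have h1 := ha_gap n₀ (n - n₀) le_rfl
      rw [Nat.add_sub_cancel' hn] at h1
      exact h1
    · apply tendsto_atTop_add_const_left
      exact tendsto_natCast_atTop_atTop.comp (tendsto_sub_atTop_nat n₀)
  have hb_top : Tendsto b atTop atTop := by
    refine tendsto_atTop_mono' atTop (f₁ := a) ?_ ?_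
    · filter_upwards [eventually_ge_atTop n₀] with n hn
      linarith [hale n hn]
    · exact ha_top
  -- ℓ bounds
  have hl0 : 0 ≤ ℓ := by
    apply ge_of_tendsto hab
    filter_upwards [] with n
    exact div_nonneg (hapos n).le (hbpos n).le
  have hl1 : ℓ ≤ 1 := by
    apply le_of_tendsto hab
    filter_upwards [eventually_ge_atTop n₀] with n hn
    rw [div_le_one (hbpos n)]
    linarith [hale n hn]
  -- finiteness and bounds on f
  have hfin : ∀ N : ℕ, (X ∩ Set.Icc 1 N).Finite :=
    fun N => Set.Finite.inter_of_right (Set.finite_Icc 1 N) X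
  have hIccCard : ∀ t : ℕ, (Set.Icc 1 t).ncard = t := by
    intro t
    rw [← Finset.coe_Icc, Set.ncard_coe_finset, Nat.card_Icc]
    omega
  have hf0 : ∀ N, 0 ≤ f N := by
    intro N
    rw [hfdef]
    positivity
  have hf1 : ∀ N, f N ≤ 1 := by
    intro N
    rcases Nat.eq_zero_or_pos N with rfl | hN
    · simp [hfdef]
    · have h1 : (X ∩ Set.Icc 1 N).ncard ≤ N := by
        have hsub2 : X ∩ Set.Icc 1 N ⊆ Set.Icc 1 N := Set.inter_subset_right
        have h2 := Set.ncard_le_ncard hsub2 (Set.finite_Icc 1 N)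
        rwa [hIccCard] at h2
      rw [hfdef, div_le_one (by exact_mod_cast hN)]
      exact_mod_cast h1
  have hbddAbove : IsBoundedUnder (· ≤ ·) atTop f := isBoundedUnder_of ⟨1, fun N => hf1 N⟩
  have hbddBelow : IsBoundedUnder (· ≥ ·) atTop f := isBoundedUnder_of ⟨0, fun N => hf0 N⟩
  -- junk bound for indices below n₀
  set B₀ : ℕ := (Finset.range n₀).sup fun j => ⌈b j⌉₊ with hB₀def
  have hB₀ : ∀ j, j < n₀ → b j ≤ (B₀ : ℝ) := by
    intro j hj
    have h1 : ⌈b j⌉₊ ≤ B₀ := Finset.le_sup (f := fun j => ⌈b j⌉₊) (Finset.mem_range.mpr hj)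
    have h2 : b j ≤ (⌈b j⌉₊ : ℝ) := Nat.le_ceil _
    exact h2.trans (by exact_mod_cast h1)
  -- covering bound used for the liminf
  have hcovL : ∀ n, n₀ ≤ n → (X ∩ Set.Icc 1 ⌊a (n+1)⌋₊).ncard ≤ B₀ + ⌊b n⌋₊ := by
    intro n hn
    have hsub : X ∩ Set.Icc 1 ⌊a (n+1)⌋₊ ⊆ Set.Icc 1 (B₀ + ⌊b n⌋₊) := by
      rintro m ⟨⟨hm0, ⟨j, hj1, hj2⟩, -⟩, hm12⟩
      rw [Set.mem_Icc] at hm12 ⊢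
      refine ⟨hm12.1, ?_⟩
      rcases lt_or_ge j n₀ with hj | hj
      · have h1 : (m:ℝ) ≤ (B₀:ℝ) := le_trans hj2 (hB₀ j hj)
        have h2 : m ≤ B₀ := by exact_mod_cast h1
        omega
      · rcases le_or_gt j n with hjn | hjn
        · have h1 : (m:ℝ) ≤ b n := le_trans hj2 (hbmono j n hj hjn)
          have h2 : m ≤ ⌊b n⌋₊ := Nat.le_floor h1
          omega
        · exfalso
          have h1 : a (n+1) ≤ a j := hamono (n+1) j (by omega) (by omega)
          have h2 : (m:ℝ) ≤ (⌊a (n+1)⌋₊ : ℝ) := by exact_mod_cast hm12.2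
          have h3 : (⌊a (n+1)⌋₊:ℝ) ≤ a (n+1) := Nat.floor_le (hapos _).le
          linarith
    have h4 := Set.ncard_le_ncard hsub (Set.finite_Icc _ _)
    rwa [hIccCard] at h4
  have hlower : Filter.liminf f atTop = 0 := by
    have h1 : 0 ≤ Filter.liminf f atTop := by
      apply le_liminf_of_le hbddAbove.isCoboundedUnder_ge
      filter_upwards [] with N
      exact hf0 N
    have h2 : Filter.liminf f atTop ≤ 0 := by
      apply le_of_forall_pos_le_add'
      intro ε hε
      rw [zero_add]
      refine liminf_le_of_frequently_le ?_ hbddBelow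
      rw [frequently_atTop]
      intro M
      have ha1top : Tendsto (fun n => a (n+1)) atTop atTop :=
        ha_top.comp (tendsto_add_atTop_nat 1)
      have ha1top' : Tendsto (fun n => a (n+1) - 1) atTop atTop :=
        tendsto_atTop_add_const_right atTop (-1) ha1top
      have e1 : ∀ᶠ n in atTop, n₀ ≤ n := eventually_ge_atTop n₀
      have e2 : ∀ᶠ n in atTop, b n / a (n+1) ≤ ε/4 :=
        hba.eventually_le_const (by linarith)
      have e3 : ∀ᶠ n in atTop, (2:ℝ) ≤ a (n+1) := ha1top.eventually_ge_atTop 2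
      have e4 : ∀ᶠ n in atTop, (B₀:ℝ) ≤ (ε/4) * (a (n+1) - 1) :=
        (ha1top'.const_mul_atTop (by linarith : (0:ℝ) < ε/4)).eventually_ge_atTop _
      have e5 : ∀ᶠ n in atTop, M ≤ ⌊a (n+1)⌋₊ :=
        (tendsto_nat_floor_atTop.comp ha1top).eventually_ge_atTop M
      obtain ⟨n, hn1, hn2, hn3, hn4, hn5⟩ := (e1.and (e2.and (e3.and (e4.and e5)))).exists
      refine ⟨⌊a (n+1)⌋₊, hn5, ?_⟩
      -- now show f ⌊a (n+1)⌋₊ ≤ ε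
      have hfloor : a (n+1) - 1 ≤ (⌊a (n+1)⌋₊ : ℝ) := (Nat.sub_one_lt_floor _).le
      have hden : (0:ℝ) < a (n+1) - 1 := by linarith
      have hc : ((X ∩ Set.Icc 1 ⌊a (n+1)⌋₊).ncard : ℝ) ≤ (B₀:ℝ) + b n := by
        have := hcovL n hn1
        have hfb : (⌊b n⌋₊ : ℝ) ≤ b n := Nat.floor_le (hbpos n).le
        have : ((X ∩ Set.Icc 1 ⌊a (n+1)⌋₊).ncard : ℝ) ≤ ((B₀ + ⌊b n⌋₊ : ℕ) : ℝ) := by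
          exact_mod_cast this
        push_cast at this
        linarith
      have step1 : f ⌊a (n+1)⌋₊ ≤ ((B₀:ℝ) + b n) / (a (n+1) - 1) := by
        rw [hfdef]
        exact div_le_div₀ (by have := hbpos n; positivity) hc hden hfloor
      have step2 : ((B₀:ℝ) + b n) / (a (n+1) - 1) ≤ ε/4 + ε/2 := by
        rw [add_div]
        have p1 : (B₀:ℝ) / (a (n+1) - 1) ≤ ε/4 := by
          rw [div_le_iff₀ hden]
          linarith
        have p2 : b n / (a (n+1) - 1) ≤ ε/2 := by
          have q1 : b n / (a (n+1) - 1) ≤ b n / (a (n+1) / 2) :=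
            div_le_div_of_nonneg_left (hbpos n).le (by linarith) (by linarith)
          have q2 : b n / (a (n+1) / 2) = 2 * (b n / a (n+1)) := by
            rw [div_div_eq_mul_div, mul_comm (b n) 2, mul_div_assoc]
          have q3 : 2 * (b n / a (n+1)) ≤ 2 * (ε/4) := by linarith
          linarith
        linarith
      linarith
    linarith
  -- limsup lower bound
  have hupper_ge : L ≤ Filter.limsup f atTop := by
    -- the comparison sequence
    set g : ℕ → ℝ := fun nn => ((b nn - (a nn + 1))/K - 1)/ b nn with hgdef
    have hbinv : Tendsto (fun nn => (b nn)⁻¹) atTop (nhds 0) := hb_top.inv_tendsto_atTop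
    have hg : Tendsto g atTop (nhds L) := by
      have base : Tendsto (fun nn => (1 - a nn / b nn - (b nn)⁻¹) * K⁻¹ - (b nn)⁻¹) atTop
          (nhds ((1 - ℓ - 0) * K⁻¹ - 0)) :=
        (((tendsto_const_nhds.sub hab).sub hbinv).mul_const K⁻¹).sub hbinv
      have hval : (1 - ℓ - 0) * K⁻¹ - 0 = L := by rw [hLdef]; ring
      rw [hval] at base
      apply base.congr
      intro nn
      have hb' : b nn ≠ 0 := (hbpos nn).ne'
      have hK' : K ≠ 0 := hK.ne'
      rw [hgdef]
      field_simp
      ring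
    apply le_of_forall_pos_le_add'
    intro ε hε
    have key : L - ε ≤ Filter.limsup f atTop := by
      refine le_limsup_of_frequently_le ?_ hbddAbove
      rw [frequently_atTop]
      intro M
      have u1 : ∀ᶠ nn in atTop, n₀ ≤ nn := eventually_ge_atTop n₀
      have u2 : ∀ᶠ nn in atTop, L - ε < g nn := hg.eventually_const_lt (by linarith)
      have u3 : ∀ᶠ nn in atTop, M ≤ ⌊b nn⌋₊ :=
        (tendsto_nat_floor_atTop.comp hb_top).eventually_ge_atTop M
      obtain ⟨nn, hnn1, hnn2, hnn3⟩ := (u1.and (u2.and u3)).exists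
      refine ⟨⌊b nn⌋₊, hnn3, ?_⟩
      -- counting from below
      have hb1 : (1:ℝ) < b nn := by linarith [hale nn hnn1, hapos nn]
      have hfl1 : 1 ≤ ⌊b nn⌋₊ := Nat.le_floor (by exact_mod_cast hb1.le)
      have hflpos : (0:ℝ) < (⌊b nn⌋₊ : ℝ) := by exact_mod_cast hfl1
      have hflle : ((⌊b nn⌋₊ : ℕ) : ℝ) ≤ b nn := Nat.floor_le (hbpos nn).le
      have hcnt := ap_count_lower k h (a nn + 1) (b nn) (by linarith [hapos nn])
      set S : Set ℕ := {m : ℕ | a nn + 1 < (m:ℝ) ∧ (m:ℝ) ≤ b nn ∧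
          ∃ t : ℤ, (m:ℤ) = ((k:ℕ):ℤ) * t + h} with hSdef
      have hsubX : S ⊆ X ∩ Set.Icc 1 ⌊b nn⌋₊ := by
        rintro m ⟨hm1, hm2, hm3⟩
        have hm0 : (0:ℝ) < (m:ℝ) := by linarith [hapos nn]
        have hm0' : 0 < m := by exact_mod_cast hm0
        refine ⟨⟨hm0', ⟨nn, hm1.le, hm2⟩, hm3⟩, ?_⟩
        rw [Set.mem_Icc]
        exact ⟨hm0', Nat.le_floor hm2⟩
      have hcard : (S.ncard : ℝ) ≤ ((X ∩ Set.Icc 1 ⌊b nn⌋₊).ncard : ℝ) := by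
        exact_mod_cast Set.ncard_le_ncard hsubX (hfin _)
      have step1 : g nn ≤ (S.ncard : ℝ) / b nn :=
        div_le_div₀ (Nat.cast_nonneg _) hcnt (hbpos nn) le_rfl
      have step2 : (S.ncard : ℝ) / b nn ≤ ((X ∩ Set.Icc 1 ⌊b nn⌋₊).ncard : ℝ) / b nn :=
        div_le_div₀ (Nat.cast_nonneg _) hcard (hbpos nn) le_rfl
      have step3 : ((X ∩ Set.Icc 1 ⌊b nn⌋₊).ncard : ℝ) / b nn ≤ f ⌊b nn⌋₊ := by
        rw [hfdef]
        exact div_le_div_of_nonneg_left (Nat.cast_nonneg _) hflpos hflle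
      linarith
    linarith
  -- limsup upper bound
  have hupper_le : ∀ ε : ℝ, 0 < ε → ∀ᶠ N : ℕ in atTop, f N ≤ L + ε := by
    intro ε hε
    set δ : ℝ := min (1/2) (ε/6) with hδdef
    have hδ0 : 0 < δ := by
      rw [hδdef]
      apply lt_min <;> linarith
    have hδε : δ ≤ ε/6 := min_le_right _ _
    have e_a : ∀ᶠ n in atTop, b n / a (n+1) ≤ δ := hba.eventually_le_const hδ0
    have e_b : ∀ᶠ n in atTop, ℓ - δ < a n / b n := hab.eventually_const_lt (by linarith)
    obtain ⟨n₁', hn₁'⟩ := eventually_atTop.mp (e_a.and e_b)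
    set n₁ : ℕ := max n₁' n₀ with hn₁def
    have hn₁ : ∀ n, n₁ ≤ n → b n / a (n+1) ≤ δ ∧ ℓ - δ < a n / b n :=
      fun n hn => hn₁' n (le_trans (le_max_left _ _) hn)
    have hn₁0 : n₀ ≤ n₁ := le_max_right _ _
    set B₁ : ℕ := (Finset.range n₁).sup (fun j => ⌈b j⌉₊) with hB₁def
    have hB₁ : ∀ j, j < n₁ → b j ≤ (B₁ : ℝ) := by
      intro j hj
      have h1 : ⌈b j⌉₊ ≤ B₁ := Finset.le_sup (f := fun j => ⌈b j⌉₊) (Finset.mem_range.mpr hj)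
      exact (Nat.le_ceil _).trans (by exact_mod_cast h1)
    have ev1 : ∀ᶠ N : ℕ in atTop, b (n₁+1) ≤ (N:ℝ) :=
      tendsto_natCast_atTop_atTop.eventually_ge_atTop _
    have ev2 : ∀ᶠ N : ℕ in atTop, ((B₁:ℝ)+2)/(N:ℝ) ≤ ε/2 :=
      (tendsto_const_div_atTop_nhds_zero_nat _).eventually_le_const (by linarith)
    filter_upwards [ev1, ev2] with N hN1 hN2
    have hNpos : (0:ℝ) < (N:ℝ) := lt_of_lt_of_le (by linarith [hapos (n₁+1), hale (n₁+1) (by omega)]) hN1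
    -- locate N between b (p+1) and b (p+2)
    have hex : ∃ m : ℕ, (N:ℝ) < b (n₁ + 1 + m + 1) := by
      obtain ⟨M, hM⟩ := eventually_atTop.mp (hb_top.eventually_gt_atTop (N:ℝ))
      exact ⟨M, hM _ (by omega)⟩
    set m₀ : ℕ := Nat.find hex with hm₀def
    set p : ℕ := n₁ + m₀ with hpdef
    have hNlt : (N:ℝ) < b (p+2) := by
      have hsp := Nat.find_spec hex
      rwa [show n₁ + 1 + m₀ + 1 = p + 2 from by omega] at hsp
    have hble : b (p+1) ≤ (N:ℝ) := by
      rcases Nat.eq_zero_or_pos m₀ with h0 | h0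
      · rw [show p + 1 = n₁ + 1 from by omega]
        exact hN1
      · have hmin := Nat.find_min hex (m := m₀ - 1) (by omega)
        push_neg at hmin
        rwa [show n₁ + 1 + (m₀ - 1) + 1 = p + 1 from by omega] at hmin
    have hp1 : n₁ ≤ p := by omega
    -- the two arithmetic-progression windows
    set S₁ : Set ℕ := {m : ℕ | a (p+1) < (m:ℝ) ∧ (m:ℝ) ≤ b (p+1) ∧
        ∃ t : ℤ, (m:ℤ) = ((k:ℕ):ℤ) * t + h} with hS₁def
    set S₂ : Set ℕ := {m : ℕ | a (p+2) < (m:ℝ) ∧ (m:ℝ) ≤ (N:ℝ) ∧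
        ∃ t : ℤ, (m:ℤ) = ((k:ℕ):ℤ) * t + h} with hS₂def
    have cov : X ∩ Set.Icc 1 N ⊆ (Set.Icc 1 B₁ ∪ Set.Icc 1 ⌊b p⌋₊) ∪ (S₁ ∪ S₂) := by
      rintro m ⟨⟨hm0, ⟨j, hj1, hj2⟩, hap⟩, hmIcc⟩
      rw [Set.mem_Icc] at hmIcc
      rcases lt_or_ge j n₁ with hj | hj
      · left; left
        rw [Set.mem_Icc]
        refine ⟨hmIcc.1, ?_⟩
        have : (m:ℝ) ≤ (B₁:ℝ) := le_trans hj2 (hB₁ j hj)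
        exact_mod_cast this
      · rcases le_or_gt j p with hjp | hjp
        · left; right
          rw [Set.mem_Icc]
          refine ⟨hmIcc.1, Nat.le_floor ?_⟩
          exact le_trans hj2 (hbmono j p (le_trans hn₁0 hj) hjp)
        · rcases eq_or_lt_of_le (show p + 1 ≤ j from hjp) with rfl | hjp2
          · right; left
            exact ⟨by linarith, hj2, hap⟩
          · rcases eq_or_lt_of_le (show p + 1 + 1 ≤ j from hjp2) with rfl | hjp3
            · right; right
              exact ⟨by linarith, by exact_mod_cast hmIcc.2, hap⟩
            · exfalso
              have h1 : a (p+3) ≤ a j := hamono (p+3) j (by omega) (by omega)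
              have h2 : b (p+2) < a (p+3) := hblt (p+2) (by omega)
              have h3 : (m:ℝ) ≤ (N:ℝ) := by exact_mod_cast hmIcc.2
              linarith
    -- cardinality bound
    have hS₁fin : S₁.Finite := (ap_finite (b (p+1))).subset (fun m hm => hm.2.1)
    have hS₂fin : S₂.Finite := (ap_finite (N:ℝ)).subset (fun m hm => hm.2.1)
    have hcovfin : ((Set.Icc 1 B₁ ∪ Set.Icc 1 ⌊b p⌋₊) ∪ (S₁ ∪ S₂)).Finite :=
      (((Set.finite_Icc _ _).union (Set.finite_Icc _ _)).union (hS₁fin.union hS₂fin))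
    have hcard1 : (X ∩ Set.Icc 1 N).ncard ≤ B₁ + ⌊b p⌋₊ + (S₁.ncard + S₂.ncard) := by
      calc (X ∩ Set.Icc 1 N).ncard
          ≤ ((Set.Icc 1 B₁ ∪ Set.Icc 1 ⌊b p⌋₊) ∪ (S₁ ∪ S₂)).ncard :=
            Set.ncard_le_ncard cov hcovfin
        _ ≤ (Set.Icc 1 B₁ ∪ Set.Icc 1 ⌊b p⌋₊).ncard + (S₁ ∪ S₂).ncard :=
            Set.ncard_union_le _ _
        _ ≤ ((Set.Icc 1 B₁).ncard + (Set.Icc 1 ⌊b p⌋₊).ncard) + (S₁.ncard + S₂.ncard) :=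
            Nat.add_le_add (Set.ncard_union_le _ _) (Set.ncard_union_le _ _)
        _ = B₁ + ⌊b p⌋₊ + (S₁.ncard + S₂.ncard) := by rw [hIccCard, hIccCard]
    have hcnt1 := ap_count_upper k h (a (p+1)) (b (p+1))
    have hcnt2 := ap_count_upper k h (a (p+2)) (N:ℝ)
    rw [← hS₁def] at hcnt1
    rw [← hS₂def] at hcnt2
    have hfloorbp : (⌊b p⌋₊ : ℝ) ≤ b p := Nat.floor_le (hbpos p).le
    have hcreal : ((X ∩ Set.Icc 1 N).ncard : ℝ) ≤
        (B₁:ℝ) + b p + (max (b (p+1) - a (p+1)) 0 / K + 1)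
          + (max ((N:ℝ) - a (p+2)) 0 / K + 1) := by
      have h5 : ((X ∩ Set.Icc 1 N).ncard : ℝ) ≤ (B₁:ℝ) + (⌊b p⌋₊:ℝ) + ((S₁.ncard:ℝ) + (S₂.ncard:ℝ)) := by
        exact_mod_cast hcard1
      linarith
    -- numerical estimates
    have hεN : (B₁:ℝ) + 2 ≤ (ε/2) * N := by
      rw [div_le_iff₀ hNpos] at hN2
      linarith
    have hbp1N : b (p+1) ≤ (N:ℝ) := hble
    have hbpδ : b p ≤ δ * (N:ℝ) := by
      have q1 : b p / a (p+1) ≤ δ := (hn₁ p hp1).1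
      rw [div_le_iff₀ (hapos (p+1))] at q1
      have q2 : a (p+1) ≤ b (p+1) := by linarith [hale (p+1) (by omega)]
      have q3 : δ * a (p+1) ≤ δ * (N:ℝ) :=
        mul_le_mul_of_nonneg_left (q2.trans hble) hδ0.le
      linarith only [q1, q3]
    have hbp1δ : b (p+1) ≤ δ * a (p+2) := by
      have q1 : b (p+1) / a (p+2) ≤ δ := (hn₁ (p+1) (by omega)).1
      rw [div_le_iff₀ (hapos (p+2))] at q1
      linarith
    have hfactor : (0:ℝ) ≤ 1 - ℓ + δ := by linarith
    have hLN : L * N = (1 - ℓ)/K * N := by rw [hLdef]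
    -- bound the two max terms
    have hmaxsum : max (b (p+1) - a (p+1)) 0 / K + max ((N:ℝ) - a (p+2)) 0 / K
        ≤ L * N + 2 * (δ * N) := by
      have hdivself : ∀ x : ℝ, 0 ≤ x → x / K ≤ x := fun x hx => div_le_self hx hK1
      have hsplit : (1 - ℓ + δ) * (N:ℝ) / K = L * N + (δ * N) / K := by
        rw [hLdef]; ring
      rcases le_or_gt (a (p+2)) (N:ℝ) with hcase | hcase
      · -- N ≥ a (p+2) : first window is tiny, second window gives main term
        have t1 : max (b (p+1) - a (p+1)) 0 ≤ δ * N := by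
          apply max_le
          · have q4 : δ * a (p+2) ≤ δ * (N:ℝ) := mul_le_mul_of_nonneg_left hcase hδ0.le
            linarith only [hbp1δ, q4, hapos (p+1)]
          · positivity
        have t1' : max (b (p+1) - a (p+1)) 0 / K ≤ δ * N := by
          calc max (b (p+1) - a (p+1)) 0 / K ≤ (δ * N) / K := by gcongr
            _ ≤ δ * N := hdivself _ (by positivity)
        have t2 : max ((N:ℝ) - a (p+2)) 0 ≤ (1 - ℓ + δ) * N := by
          apply max_le
          · rcases le_or_gt ℓ δ with hld | hld
            · have q5 : (N:ℝ) ≤ (1 - ℓ + δ) * N :=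
                le_mul_of_one_le_left (Nat.cast_nonneg N) (by linarith only [hld, hl1])
              linarith only [q5, hapos (p+2)]
            · have q3 : ℓ - δ < a (p+2) / b (p+2) := (hn₁ (p+2) (by omega)).2
              rw [lt_div_iff₀ (hbpos (p+2))] at q3
              have q6 : (ℓ - δ) * (N:ℝ) < (ℓ - δ) * b (p+2) :=
                mul_lt_mul_of_pos_left hNlt (by linarith only [hld])
              have q7 : (1 - ℓ + δ) * (N:ℝ) = (N:ℝ) - (ℓ - δ) * (N:ℝ) := by ring
              linarith only [q3, q6, q7]
          · positivity
        have t2' : max ((N:ℝ) - a (p+2)) 0 / K ≤ L * N + (δ * N) := by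
          calc max ((N:ℝ) - a (p+2)) 0 / K ≤ (1 - ℓ + δ) * N / K := by gcongr
            _ = L * N + (δ * N) / K := hsplit
            _ ≤ L * N + δ * N := by linarith only [hdivself (δ * N) (by positivity : (0:ℝ) ≤ δ * N)]
        linarith only [t1', t2']
      · -- N < a (p+2) : second window empty
        have t2 : max ((N:ℝ) - a (p+2)) 0 = 0 := max_eq_right (by linarith)
        have t1 : max (b (p+1) - a (p+1)) 0 ≤ (1 - ℓ + δ) * N := by
          apply max_le
          · have hb1 : b (p+1) - a (p+1) ≤ (1 - ℓ + δ) * b (p+1) := by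
              rcases le_or_gt ℓ δ with hld | hld
              · have q5 : b (p+1) ≤ (1 - ℓ + δ) * b (p+1) :=
                  le_mul_of_one_le_left (hbpos (p+1)).le (by linarith only [hld, hl1])
                linarith only [q5, hapos (p+1)]
              · have q3 : ℓ - δ < a (p+1) / b (p+1) := (hn₁ (p+1) (by omega)).2
                rw [lt_div_iff₀ (hbpos (p+1))] at q3
                have q7 : (1 - ℓ + δ) * b (p+1) = b (p+1) - (ℓ - δ) * b (p+1) := by ring
                linarith only [q3, q7]
            have hb2 : (1 - ℓ + δ) * b (p+1) ≤ (1 - ℓ + δ) * N :=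
              mul_le_mul_of_nonneg_left hbp1N hfactor
            linarith only [hb1, hb2]
          · positivity
        have t1' : max (b (p+1) - a (p+1)) 0 / K ≤ L * N + (δ * N) := by
          calc max (b (p+1) - a (p+1)) 0 / K ≤ (1 - ℓ + δ) * N / K := by gcongr
            _ = L * N + (δ * N) / K := hsplit
            _ ≤ L * N + δ * N := by linarith only [hdivself (δ * N) (by positivity : (0:ℝ) ≤ δ * N)]
        rw [t2, zero_div]
        have hδN0 : (0:ℝ) ≤ δ * N := by positivity
        linarith only [t1', hδN0]
    -- combine everything
    have hδN : δ * (N:ℝ) ≤ (ε/6) * N := mul_le_mul_of_nonneg_right hδε (Nat.cast_nonneg N)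
    have hfinal : ((X ∩ Set.Icc 1 N).ncard : ℝ) ≤ (L + ε) * N := by
      linarith only [hcreal, hεN, hbpδ, hmaxsum, hδN]
    rw [hfdef, div_le_iff₀ hNpos]
    exact hfinal
  have hupper : Filter.limsup f atTop = L := by
    have hle : Filter.limsup f atTop ≤ L := by
      apply le_of_forall_pos_le_add'
      intro ε hε
      exact limsup_le_of_le hbddBelow.isCoboundedUnder_le (hupper_le ε hε)
    exact le_antisymm hle hupper_ge
  constructor
  · exact hupper
  · exact hlower
end

section
/- Let q ∈ [1,∞), let (αₙ)ₙ≥1 be a sequence in [0,1] with Σₙ αₙ = 1, and let (μₙ)ₙ≥1 be a sequence of upper densities on ℕ⁺ (each μₙ satisfies: μₙ(ℕ⁺)=1, monotone, subadditive, μₙ(k·X+h)=(1/k)μₙ(X), and 0 ≤ μₙ ≤ 1). Then μ*(X) := (Σₙ αₙ·(μₙ(X))^q)^{1/q} is again an upper density on ℕ⁺. -/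
noncomputable def combo (q : ℝ) (α : ℕ → ℝ) (μ : ℕ → Set ℕ+ → ℝ) (X : Set ℕ+) : ℝ :=
  (∑' n : ℕ, α n * (μ n X) ^ q) ^ (1 / q)

theorem stmt15 (q : ℝ) (hq : 1 ≤ q)
    (α : ℕ → ℝ) (hα : ∀ n, α n ∈ Set.Icc (0 : ℝ) 1) (hsum : ∑' n : ℕ, α n = 1)
    (μ : ℕ → Set ℕ+ → ℝ)
    (hd : ∀ n, μ n Set.univ = 1 ∧
      (∀ X Y : Set ℕ+, X ⊆ Y → μ n X ≤ μ n Y) ∧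
      (∀ X Y : Set ℕ+, μ n (X ∪ Y) ≤ μ n X + μ n Y) ∧
      (∀ (X : Set ℕ+) (h k : ℕ+),
        μ n ((fun x => k * x + h) '' X) = ((k : ℕ) : ℝ)⁻¹ * μ n X) ∧
      (∀ X : Set ℕ+, 0 ≤ μ n X ∧ μ n X ≤ 1)) :
    combo q α μ Set.univ = 1 ∧
    (∀ X Y : Set ℕ+, X ⊆ Y → combo q α μ X ≤ combo q α μ Y) ∧
    (∀ X Y : Set ℕ+, combo q α μ (X ∪ Y) ≤ combo q α μ X + combo q α μ Y) ∧
    (∀ (X : Set ℕ+) (h k : ℕ+),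
      combo q α μ ((fun x => k * x + h) '' X) = ((k : ℕ) : ℝ)⁻¹ * combo q α μ X) ∧
    (∀ X : Set ℕ+, 0 ≤ combo q α μ X ∧ combo q α μ X ≤ 1) := by
  have hq0 : (0:ℝ) < q := lt_of_lt_of_le one_pos hq
  have hqne : q ≠ 0 := ne_of_gt hq0
  have hαs : Summable α := by
    by_contra h
    rw [tsum_eq_zero_of_not_summable h] at hsum
    norm_num at hsum
  -- basic bounds on terms
  have hterm_nonneg : ∀ (X : Set ℕ+) n, 0 ≤ α n * μ n X ^ q := fun X n =>
    mul_nonneg (hα n).1 (Real.rpow_nonneg ((hd n).2.2.2.2 X).1 q)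
  have hterm_le : ∀ (X : Set ℕ+) n, α n * μ n X ^ q ≤ α n := by
    intro X n
    have h1 : μ n X ^ q ≤ 1 := by
      calc μ n X ^ q ≤ (1:ℝ) ^ q :=
        Real.rpow_le_rpow ((hd n).2.2.2.2 X).1 ((hd n).2.2.2.2 X).2 (le_of_lt hq0)
      _ = 1 := Real.one_rpow q
    calc α n * μ n X ^ q ≤ α n * 1 := mul_le_mul_of_nonneg_left h1 (hα n).1
    _ = α n := mul_one _
  have hsummable : ∀ X : Set ℕ+, Summable (fun n => α n * μ n X ^ q) :=
    fun X => Summable.of_nonneg_of_le (hterm_nonneg X) (hterm_le X) hαs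
  have htsum_nonneg : ∀ X : Set ℕ+, 0 ≤ ∑' n, α n * μ n X ^ q :=
    fun X => tsum_nonneg (hterm_nonneg X)
  have htsum_le_one : ∀ X : Set ℕ+, ∑' n, α n * μ n X ^ q ≤ 1 := by
    intro X
    calc ∑' n, α n * μ n X ^ q ≤ ∑' n, α n :=
      Summable.tsum_le_tsum (hterm_le X) (hsummable X) hαs
    _ = 1 := hsum
  refine ⟨?_, ?_, ?_, ?_, ?_⟩
  · -- combo univ = 1
    unfold combo
    have : ∀ n : ℕ, α n * μ n Set.univ ^ q = α n := by
      intro n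
      rw [(hd n).1, Real.one_rpow, mul_one]
    rw [tsum_congr this, hsum, Real.one_rpow]
  · -- monotone
    intro X Y hXY
    unfold combo
    apply Real.rpow_le_rpow (htsum_nonneg X)
    · exact Summable.tsum_le_tsum (fun n => mul_le_mul_of_nonneg_left
        (Real.rpow_le_rpow ((hd n).2.2.2.2 X).1 ((hd n).2.1 X Y hXY) (le_of_lt hq0))
        (hα n).1) (hsummable X) (hsummable Y)
    · positivity
  · -- subadditive
    intro X Y
    unfold combo
    set f : ℕ → ℝ := fun n => (α n) ^ (1/q) * μ n X
    set g : ℕ → ℝ := fun n => (α n) ^ (1/q) * μ n Y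
    have hfnn : ∀ n, 0 ≤ f n := fun n =>
      mul_nonneg (Real.rpow_nonneg (hα n).1 _) ((hd n).2.2.2.2 X).1
    have hgnn : ∀ n, 0 ≤ g n := fun n =>
      mul_nonneg (Real.rpow_nonneg (hα n).1 _) ((hd n).2.2.2.2 Y).1
    have hpow : ∀ (n : ℕ) (c : ℝ), 0 ≤ c → ((α n) ^ (1/q) * c) ^ q = α n * c ^ q := by
      intro n c hc
      rw [Real.mul_rpow (Real.rpow_nonneg (hα n).1 _) hc,
        ← Real.rpow_mul (hα n).1, one_div_mul_cancel hqne, Real.rpow_one]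
    have hfsum : Summable (fun n => f n ^ q) := by
      have : ∀ n, f n ^ q = α n * μ n X ^ q := fun n => hpow n _ ((hd n).2.2.2.2 X).1
      exact (summable_congr this).2 (hsummable X)
    have hgsum : Summable (fun n => g n ^ q) := by
      have : ∀ n, g n ^ q = α n * μ n Y ^ q := fun n => hpow n _ ((hd n).2.2.2.2 Y).1
      exact (summable_congr this).2 (hsummable Y)
    have hmink := Real.Lp_add_le_tsum_of_nonneg' hq hfnn hgnn hfsum hgsum
    have key : (∑' n, α n * μ n (X ∪ Y) ^ q) ^ (1/q)
        ≤ (∑' n, (f n + g n) ^ q) ^ (1/q) := by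
      apply Real.rpow_le_rpow (htsum_nonneg _) _ (by positivity)
      apply Summable.tsum_le_tsum _ (hsummable _)
        ((Real.Lp_add_le_tsum_of_nonneg hq hfnn hgnn hfsum hgsum).1)
      intro n
      have : f n + g n = (α n) ^ (1/q) * (μ n X + μ n Y) := by simp [f, g, mul_add]
      rw [this, hpow n _ (add_nonneg ((hd n).2.2.2.2 X).1 ((hd n).2.2.2.2 Y).1)]
      · exact mul_le_mul_of_nonneg_left
          (Real.rpow_le_rpow ((hd n).2.2.2.2 _).1 ((hd n).2.2.1 X Y) (le_of_lt hq0))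
          (hα n).1
    calc (∑' n, α n * μ n (X ∪ Y) ^ q) ^ (1/q)
        ≤ (∑' n, (f n + g n) ^ q) ^ (1/q) := key
      _ ≤ (∑' n, f n ^ q) ^ (1/q) + (∑' n, g n ^ q) ^ (1/q) := hmink
      _ = (∑' n, α n * μ n X ^ q) ^ (1/q) + (∑' n, α n * μ n Y ^ q) ^ (1/q) := by
          rw [tsum_congr (fun n => hpow n _ ((hd n).2.2.2.2 X).1),
            tsum_congr (fun n => hpow n _ ((hd n).2.2.2.2 Y).1)]
  · -- scaling
    intro X h k
    unfold combo
    have hk0 : (0:ℝ) ≤ ((k:ℕ):ℝ)⁻¹ := by positivity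
    have : ∀ n : ℕ, α n * μ n ((fun x => k * x + h) '' X) ^ q
        = (((k:ℕ):ℝ)⁻¹) ^ q * (α n * μ n X ^ q) := by
      intro n
      rw [(hd n).2.2.2.1 X h k, Real.mul_rpow hk0 ((hd n).2.2.2.2 X).1]
      ring
    rw [tsum_congr this, tsum_mul_left,
      Real.mul_rpow (by positivity) (htsum_nonneg X),
      ← Real.rpow_mul hk0, mul_one_div_cancel hqne, Real.rpow_one]
  · -- bounds
    intro X
    constructor
    · exact Real.rpow_nonneg (htsum_nonneg X) _
    · unfold combo
      calc (∑' n, α n * μ n X ^ q) ^ (1/q) ≤ (1:ℝ) ^ (1/q) :=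
        Real.rpow_le_rpow (htsum_nonneg X) (htsum_le_one X) (by positivity)
      _ = 1 := Real.one_rpow _
end

section
/- Let μ* be an upper quasi-density on ℕ⁺ with lower dual μ∗(X) = 1 − μ*(Xᶜ). For k ∈ ℕ⁺ and S ⊆ ℕ⁺ let w_k(S) be the number of residues h ∈ {0,…,k−1} such that μ*(S ∩ (k·ℕ⁺ + h)) > 0. Then for every X ⊆ ℕ⁺ and every k ∈ ℕ⁺: 1 − w_k(Xᶜ)/k ≤ μ∗(X) ≤ μ*(X) ≤ w_k(X)/k. -/
theorem stmt16 (μ : Set ℕ+ → ℝ)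
    (huniv : μ Set.univ = 1) (hle : ∀ X : Set ℕ+, μ X ≤ 1)
    (hsub : ∀ X Y : Set ℕ+, μ (X ∪ Y) ≤ μ X + μ Y)
    (hhom : ∀ (X : Set ℕ+) (h k : ℕ+),
      μ ((fun x => k * x + h) '' X) = ((k : ℕ) : ℝ)⁻¹ * μ X)
    (X : Set ℕ+) (k : ℕ+) :
    1 - ({h : ℕ | h < (k : ℕ) ∧
          0 < μ (Xᶜ ∩ {x : ℕ+ | ∃ m : ℕ+, (x : ℕ) = (k : ℕ) * (m : ℕ) + h})}.ncard : ℝ) / (k : ℕ)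
        ≤ 1 - μ Xᶜ ∧
    1 - μ Xᶜ ≤ μ X ∧
    μ X ≤ ({h : ℕ | h < (k : ℕ) ∧
          0 < μ (X ∩ {x : ℕ+ | ∃ m : ℕ+, (x : ℕ) = (k : ℕ) * (m : ℕ) + h})}.ncard : ℝ) / (k : ℕ) := by
  classical
  have hkpos : (0:ℝ) < ((k:ℕ):ℝ) := by exact_mod_cast k.pos
  -- singleton images
  have key : ∀ (a h k' : ℕ+), μ {k' * a + h} = ((k' : ℕ) : ℝ)⁻¹ * μ {a} := by
    intro a h k'
    have := hhom {a} h k'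
    simpa using this
  have hone : μ {1} = 0 := by
    have a1 := key 1 2 1
    have a2 := key 1 1 2
    have e : (1 * 1 + 2 : ℕ+) = 2 * 1 + 1 := by decide
    rw [e] at a1
    rw [a1] at a2
    push_cast at a2
    linarith
  have hsingle : ∀ n : ℕ+, μ {n} = 0 := by
    intro n
    by_cases hn1 : n = 1
    · rw [hn1]; exact hone
    · have h2 : (1:ℕ+) < n := lt_of_le_of_ne n.one_le (Ne.symm hn1)
      have e : (1:ℕ+) * 1 + (n - 1) = n := by
        rw [one_mul]; exact PNat.add_sub_of_lt h2
      have := key 1 (n - 1) 1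
      rw [e] at this
      rw [this, hone]
      simp
  have hempty : μ ∅ = 0 := by
    have := hhom ∅ 1 2
    simp only [Set.image_empty] at this
    push_cast at this
    linarith
  have hfin : ∀ F : Set ℕ+, F.Finite → μ F ≤ 0 := by
    intro F hF
    refine Set.Finite.induction_on (motive := fun s _ => μ s ≤ 0) F hF (le_of_eq hempty) ?_
    intro a s _ _ ih
    rw [Set.insert_eq]
    calc μ ({a} ∪ s) ≤ μ {a} + μ s := hsub _ _
      _ ≤ 0 := by rw [hsingle a]; linarith
  have hsum : ∀ (s : Finset ℕ) (f : ℕ → Set ℕ+),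
      μ (⋃ h ∈ s, f h) ≤ ∑ h ∈ s, μ (f h) := by
    intro s f
    induction s using Finset.induction with
    | empty => simp [hempty]
    | insert _ _ hnotmem ih =>
      rename_i a s
      rw [Finset.set_biUnion_insert, Finset.sum_insert hnotmem]
      calc μ (f a ∪ ⋃ h ∈ s, f h) ≤ μ (f a) + μ (⋃ h ∈ s, f h) := hsub _ _
        _ ≤ μ (f a) + ∑ h ∈ s, μ (f h) := by linarith
  -- the main bound, for an arbitrary set Y
  have main : ∀ Y : Set ℕ+, μ Y ≤ (({h : ℕ | h < (k : ℕ) ∧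
      0 < μ (Y ∩ {x : ℕ+ | ∃ m : ℕ+, (x : ℕ) = (k : ℕ) * (m : ℕ) + h})}.ncard : ℝ)) / (k : ℕ) := by
    intro Y
    set A : ℕ → Set ℕ+ := fun h => {x : ℕ+ | ∃ m : ℕ+, (x : ℕ) = (k : ℕ) * (m : ℕ) + h} with hAdef
    -- each intersected class has measure at most 1/k
    have hclass : ∀ h : ℕ, μ (Y ∩ A h) ≤ ((k:ℕ):ℝ)⁻¹ := by
      intro h
      by_cases h0 : h = 0
      · -- A 0 = {k} ∪ range (k*·+k)
        subst h0
        have hA : Y ∩ A 0 = (Y ∩ {(k:ℕ+)}) ∪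
            ((fun x => k * x + k) '' ((fun x => k * x + k) ⁻¹' Y)) := by
          rw [Set.image_preimage_eq_inter_range]
          ext x
          simp only [hAdef, Set.mem_inter_iff, Set.mem_setOf_eq, Set.mem_union,
            Set.mem_singleton_iff, Set.mem_range]
          constructor
          · rintro ⟨hxY, m, hm⟩
            by_cases hm1 : m = 1
            · left
              refine ⟨hxY, ?_⟩
              apply PNat.eq
              subst hm1
              simpa using hm
            · right
              refine ⟨hxY, ?_⟩
              have h2 : (1:ℕ+) < m := lt_of_le_of_ne m.one_le (Ne.symm hm1)
              refine ⟨m - 1, ?_⟩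
              apply PNat.eq
              have hc : ((m - 1 : ℕ+) : ℕ) = (m:ℕ) - 1 := by
                simp [PNat.sub_coe, h2]
              push_cast
              rw [hc, hm]
              have hm1' : (m:ℕ) - 1 + 1 = (m:ℕ) := Nat.succ_pred_eq_of_pos m.pos
              calc (k:ℕ) * ((m:ℕ) - 1) + (k:ℕ) = (k:ℕ) * (((m:ℕ) - 1) + 1) := by ring
                _ = (k:ℕ) * (m:ℕ) := by rw [hm1']
                _ = (k:ℕ) * (m:ℕ) + 0 := by ring
          · rintro (⟨hxY, rfl⟩ | ⟨hxY, a, rfl⟩)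
            · exact ⟨hxY, 1, by simp⟩
            · refine ⟨hxY, a + 1, ?_⟩
              push_cast
              ring
        rw [hA]
        calc μ ((Y ∩ {(k:ℕ+)}) ∪ _) ≤ μ (Y ∩ {(k:ℕ+)}) + μ _ := hsub _ _
          _ ≤ 0 + ((k:ℕ):ℝ)⁻¹ * μ ((fun x => k * x + k) ⁻¹' Y) := by
              rw [hhom]
              have := hfin (Y ∩ {(k:ℕ+)}) ((Set.finite_singleton _).inter_of_right Y)
              linarith
          _ ≤ ((k:ℕ):ℝ)⁻¹ := by
              have h1 := hle ((fun x => k * x + k) ⁻¹' Y)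
              have h2 : (0:ℝ) ≤ ((k:ℕ):ℝ)⁻¹ := by positivity
              nlinarith
      · -- positive residue: A h = range (k*·+h')
        have hpos : 0 < h := Nat.pos_of_ne_zero h0
        set h' : ℕ+ := ⟨h, hpos⟩ with hh'
        have hA : Y ∩ A h = (fun x => k * x + h') '' ((fun x => k * x + h') ⁻¹' Y) := by
          rw [Set.image_preimage_eq_inter_range]
          congr 1
          ext x
          simp only [hAdef, Set.mem_setOf_eq, Set.mem_range]
          constructor
          · rintro ⟨m, hm⟩
            have hch : (h' : ℕ) = h := rfl
            exact ⟨m, PNat.eq (by push_cast; rw [hch]; omega)⟩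
          · rintro ⟨m, rfl⟩
            have hch : (h' : ℕ) = h := rfl
            exact ⟨m, by push_cast; rw [hch]⟩
        rw [hA, hhom]
        have h1 := hle ((fun x => k * x + h') ⁻¹' Y)
        have h2 : (0:ℝ) ≤ ((k:ℕ):ℝ)⁻¹ := by positivity
        nlinarith
    -- cover Y by residue classes and a finite set
    set B : Set ℕ+ := {x : ℕ+ | (x:ℕ) < (k:ℕ)} with hBdef
    have hcover : Y = (⋃ h ∈ Finset.range (k:ℕ), Y ∩ A h) ∪ (Y ∩ B) := by
      ext x
      simp only [Set.mem_union, Set.mem_iUnion, Set.mem_inter_iff, Finset.mem_range,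
        hAdef, hBdef, Set.mem_setOf_eq, exists_prop]
      constructor
      · intro hx
        by_cases hxk : (x:ℕ) < (k:ℕ)
        · exact Or.inr ⟨hx, hxk⟩
        · left
          refine ⟨(x:ℕ) % (k:ℕ), Nat.mod_lt _ k.pos, hx,
            ⟨⟨(x:ℕ) / (k:ℕ), Nat.div_pos (le_of_not_gt hxk) k.pos⟩, ?_⟩⟩
          exact (Nat.div_add_mod (x:ℕ) (k:ℕ)).symm
      · rintro (⟨h, _, hx, _⟩ | ⟨hx, _⟩) <;> exact hx
    have hBfin : B.Finite := by
      have : B = (fun x : ℕ+ => (x:ℕ)) ⁻¹' (Set.Iio (k:ℕ)) := rfl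
      rw [this]
      exact Set.Finite.preimage (Set.injOn_of_injective PNat.coe_injective)
        (Set.finite_Iio _)
    set W : Finset ℕ := (Finset.range (k:ℕ)).filter (fun h => 0 < μ (Y ∩ A h)) with hWdef
    have hsum1 : ∑ h ∈ Finset.range (k:ℕ), μ (Y ∩ A h) ≤ (W.card : ℝ) * ((k:ℕ):ℝ)⁻¹ := by
      calc ∑ h ∈ Finset.range (k:ℕ), μ (Y ∩ A h)
          ≤ ∑ h ∈ Finset.range (k:ℕ),
              (if 0 < μ (Y ∩ A h) then ((k:ℕ):ℝ)⁻¹ else 0) := by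
            apply Finset.sum_le_sum
            intro h _
            by_cases hP : 0 < μ (Y ∩ A h)
            · simpa [hP] using hclass h
            · simp only [hP, if_false]
              exact le_of_not_gt hP
        _ = ∑ h ∈ W, ((k:ℕ):ℝ)⁻¹ := by rw [hWdef, Finset.sum_filter]
        _ = (W.card : ℝ) * ((k:ℕ):ℝ)⁻¹ := by rw [Finset.sum_const]; simp [mul_comm]
    have hncard : ({h : ℕ | h < (k : ℕ) ∧
        0 < μ (Y ∩ {x : ℕ+ | ∃ m : ℕ+, (x : ℕ) = (k : ℕ) * (m : ℕ) + h})}.ncard : ℝ)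
        = (W.card : ℝ) := by
      congr 1
      have : {h : ℕ | h < (k : ℕ) ∧
          0 < μ (Y ∩ {x : ℕ+ | ∃ m : ℕ+, (x : ℕ) = (k : ℕ) * (m : ℕ) + h})} = ↑W := by
        ext h
        simp [hWdef, hAdef, Finset.mem_filter, Finset.mem_range]
      rw [this, Set.ncard_coe_finset]
    rw [hncard]
    have step1 : μ Y ≤ (∑ h ∈ Finset.range (k:ℕ), μ (Y ∩ A h)) + μ (Y ∩ B) := by
      calc μ Y = μ ((⋃ h ∈ Finset.range (k:ℕ), Y ∩ A h) ∪ (Y ∩ B)) := by rw [← hcover]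
        _ ≤ μ (⋃ h ∈ Finset.range (k:ℕ), Y ∩ A h) + μ (Y ∩ B) := hsub _ _
        _ ≤ (∑ h ∈ Finset.range (k:ℕ), μ (Y ∩ A h)) + μ (Y ∩ B) := by
            have := hsum (Finset.range (k:ℕ)) (fun h => Y ∩ A h)
            linarith
    have hB0 : μ (Y ∩ B) ≤ 0 := hfin _ (hBfin.inter_of_right Y)
    have : μ Y ≤ (W.card : ℝ) * ((k:ℕ):ℝ)⁻¹ := by linarith
    calc μ Y ≤ (W.card : ℝ) * ((k:ℕ):ℝ)⁻¹ := this
      _ = (W.card : ℝ) / ((k:ℕ):ℝ) := by rw [div_eq_mul_inv]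
  -- assemble the three inequalities
  have hmid : 1 - μ Xᶜ ≤ μ X := by
    have h1 : μ (X ∪ Xᶜ) ≤ μ X + μ Xᶜ := hsub X Xᶜ
    rw [Set.union_compl_self, huniv] at h1
    linarith
  refine ⟨?_, hmid, main X⟩
  have := main Xᶜ
  linarith
end

section
/- Let μ* be an upper quasi-density on ℕ⁺ and let P ⊆ ℕ⁺ be the set of primes. Then μ*(P) = 0. -/
open Finset in
lemma aux_prod_small (ε : ℝ) (hε : 0 < ε) :
    ∃ N : ℕ, ∏ p ∈ (Finset.range N).filter Nat.Prime, (1 - (p:ℝ)⁻¹) < ε := by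
  classical
  set f : ℕ → ℝ := Set.indicator {p | p.Prime} (fun n : ℕ => (1 : ℝ) / n) with hf
  have hnn : ∀ n, 0 ≤ f n := by
    intro n
    by_cases h : n ∈ {p | p.Prime} <;> simp [hf, Set.indicator, h]
  have htend := (not_summable_iff_tendsto_nat_atTop_of_nonneg hnn).mp
    not_summable_one_div_on_primes
  obtain ⟨N, hN⟩ := (htend.eventually_ge_atTop (-Real.log ε + 1)).exists
  refine ⟨N, ?_⟩
  have hsum : ∑ i ∈ Finset.range N, f i
      = ∑ p ∈ (Finset.range N).filter Nat.Prime, (1:ℝ)/p := by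
    rw [Finset.sum_filter]
    refine Finset.sum_congr rfl fun i _ => ?_
    by_cases h : i.Prime <;> simp [hf, Set.indicator, h]
  have hprod : ∏ p ∈ (Finset.range N).filter Nat.Prime, (1 - (p:ℝ)⁻¹)
      ≤ Real.exp (-∑ p ∈ (Finset.range N).filter Nat.Prime, (1:ℝ)/p) := by
    rw [← Finset.sum_neg_distrib, Real.exp_sum]
    refine Finset.prod_le_prod (fun p hp => ?_) (fun p hp => ?_)
    · have hp2 : 2 ≤ p := (Finset.mem_filter.mp hp).2.two_le
      have : (p:ℝ)⁻¹ ≤ 1 := by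
        rw [inv_le_one_iff₀]; right; exact_mod_cast Nat.one_le_iff_ne_zero.mpr (by omega)
      linarith
    · rw [one_div]
      have := Real.add_one_le_exp (-(p:ℝ)⁻¹)
      linarith
  calc ∏ p ∈ (Finset.range N).filter Nat.Prime, (1 - (p:ℝ)⁻¹)
      ≤ Real.exp (-∑ p ∈ (Finset.range N).filter Nat.Prime, (1:ℝ)/p) := hprod
    _ < ε := by
        rw [← Real.exp_log hε]
        apply Real.exp_lt_exp.mpr
        rw [← hsum]; linarith

theorem stmt17 (μ : Set ℕ+ → ℝ)
    (huniv : μ Set.univ = 1) (hle : ∀ X : Set ℕ+, μ X ≤ 1)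
    (hsub : ∀ X Y : Set ℕ+, μ (X ∪ Y) ≤ μ X + μ Y)
    (hhom : ∀ (X : Set ℕ+) (h k : ℕ+),
      μ ((fun x => k * x + h) '' X) = ((k : ℕ) : ℝ)⁻¹ * μ X) :
    μ {p : ℕ+ | Nat.Prime (p : ℕ)} = 0 := by
  classical
  set P : Set ℕ+ := {p : ℕ+ | Nat.Prime (p : ℕ)} with hP
  -- nonnegativity
  have hnn : ∀ X : Set ℕ+, 0 ≤ μ X := by
    intro X
    have h1 : (1:ℝ) ≤ μ X + μ Xᶜ := by
      rw [← huniv, ← Set.union_compl_self X]; exact hsub X Xᶜ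
    linarith [hle Xᶜ]
  -- subset of a residue class
  have hclass : ∀ (X : Set ℕ+) (k h : ℕ+),
      (∀ x ∈ X, ∃ y : ℕ+, x = k * y + h) → μ X ≤ ((k:ℕ):ℝ)⁻¹ := by
    intro X k h hX
    have himg : (fun y : ℕ+ => k * y + h) '' ((fun y : ℕ+ => k * y + h) ⁻¹' X) = X := by
      apply Set.Subset.antisymm (Set.image_preimage_subset _ _)
      intro x hx
      obtain ⟨y, rfl⟩ := hX x hx
      exact ⟨y, hx, rfl⟩
    have := hhom ((fun y : ℕ+ => k * y + h) ⁻¹' X) h k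
    rw [himg] at this
    rw [this]
    have hknn : (0:ℝ) ≤ ((k:ℕ):ℝ)⁻¹ := by positivity
    calc ((k:ℕ):ℝ)⁻¹ * μ _ ≤ ((k:ℕ):ℝ)⁻¹ * 1 :=
          mul_le_mul_of_nonneg_left (hle _) hknn
      _ = ((k:ℕ):ℝ)⁻¹ := mul_one _
  -- squeezing: bounded above by 1/k for all k gives ≤ 0
  have hsqueeze : ∀ r : ℝ, (∀ k : ℕ+, r ≤ ((k:ℕ):ℝ)⁻¹) → r ≤ 0 := by
    intro r hr
    by_contra hpos
    push_neg at hpos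
    obtain ⟨m, hm⟩ := exists_nat_gt r⁻¹
    have h1 := hr ⟨m + 1, Nat.succ_pos m⟩
    have h1 : r ≤ ((m:ℝ) + 1)⁻¹ := by
      rw [PNat.mk_coe] at h1
      push_cast at h1
      exact h1
    have h2 : r * r⁻¹ = 1 := mul_inv_cancel₀ (ne_of_gt hpos)
    have h3 : ((m:ℝ) + 1) * ((m:ℝ)+1)⁻¹ = 1 := mul_inv_cancel₀ (by positivity)
    nlinarith
  -- empty set
  have hempty : μ (∅ : Set ℕ+) ≤ 0 := by
    apply hsqueeze
    intro k
    exact hclass ∅ k 1 (by intro x hx; exact absurd hx (Set.notMem_empty x))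
  -- singletons
  have hsingle : ∀ n : ℕ+, μ {n} ≤ 0 := by
    intro n
    apply hsqueeze
    intro k
    have hsh := hhom {n} (k + 1) 1
    have himg : (fun x : ℕ+ => 1 * x + (k + 1)) '' {n} = {n + (k + 1)} := by
      simp
    rw [himg] at hsh
    simp only [PNat.one_coe, Nat.cast_one, inv_one, one_mul] at hsh
    rw [← hsh]
    apply hclass _ k (n + 1)
    intro x hx
    rw [Set.mem_singleton_iff] at hx
    subst hx
    exact ⟨1, by ring⟩
  -- finite subadditivity
  have hfin : ∀ (s : Finset ℕ+) (A : ℕ+ → Set ℕ+),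
      μ (⋃ i ∈ s, A i) ≤ ∑ i ∈ s, μ (A i) := by
    intro s A
    induction s using Finset.induction_on with
    | empty => simpa using hempty
    | insert a s hni ih =>
      rw [Finset.set_biUnion_insert, Finset.sum_insert hni]
      calc μ (A a ∪ ⋃ i ∈ s, A i) ≤ μ (A a) + μ (⋃ i ∈ s, A i) := hsub _ _
        _ ≤ μ (A a) + ∑ i ∈ s, μ (A i) := by linarith
  -- main estimate
  have hmain : ∀ ε : ℝ, 0 < ε → μ P ≤ ε := by
    intro ε hε
    obtain ⟨N, hN⟩ := aux_prod_small ε hε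
    set s : Finset ℕ := (Finset.range N).filter Nat.Prime with hs
    set k0 : ℕ := ∏ p ∈ s, p with hk0
    have hk0pos : 0 < k0 := Finset.prod_pos fun p hp => (Finset.mem_filter.mp hp).2.pos
    set k : ℕ+ := ⟨k0, hk0pos⟩ with hk
    have hkk : (k : ℕ) = k0 := rfl
    set F : Finset ℕ+ := (Finset.Icc 1 k).filter (fun p => Nat.Prime (p:ℕ)) with hF
    set S : Finset ℕ+ := (Finset.Icc 1 k).filter (fun h => Nat.Coprime (h:ℕ) k0) with hS
    set C : ℕ+ → Set ℕ+ := fun h => {x : ℕ+ | ∃ y : ℕ+, x = k * y + h} with hC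
    have hcover : P = (⋃ p ∈ F, ({p} : Set ℕ+)) ∪ (⋃ h ∈ S, P ∩ C h) := by
      apply Set.Subset.antisymm
      · intro x hx
        by_cases hxk : (x:ℕ) ≤ k0
        · left
          have hxF : x ∈ F := by
            rw [hF]
            refine Finset.mem_filter.mpr ⟨Finset.mem_Icc.mpr ⟨x.one_le, ?_⟩, hx⟩
            rw [← PNat.coe_le_coe]
            exact hxk
          exact Set.mem_biUnion hxF rfl
        · right
          push_neg at hxk
          have hx1 : 1 ≤ (x:ℕ) := x.one_le
          set r0 : ℕ := ((x:ℕ) - 1) % k0 + 1 with hr0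
          set y0 : ℕ := ((x:ℕ) - 1) / k0 with hy0
          have hdm := Nat.div_add_mod ((x:ℕ) - 1) k0
          rw [← hy0] at hdm
          have hmlt := Nat.mod_lt ((x:ℕ) - 1) hk0pos
          have hxeq : (x:ℕ) = k0 * y0 + r0 := by rw [hr0]; omega
          have hy0pos : 0 < y0 := by
            have hk1 : k0 ≤ (x:ℕ) - 1 := by omega
            rw [hy0]
            exact Nat.div_pos hk1 hk0pos
          have hr0pos : 0 < r0 := by rw [hr0]; exact Nat.succ_pos _
          have hr0le : r0 ≤ k0 := by rw [hr0]; omega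
          have hcop : Nat.Coprime r0 k0 := by
            rw [Nat.coprime_iff_gcd_eq_one]
            by_contra hg
            have hd1 : Nat.gcd r0 k0 ∣ r0 := Nat.gcd_dvd_left _ _
            have hd2 : Nat.gcd r0 k0 ∣ k0 := Nat.gcd_dvd_right _ _
            have hdx : Nat.gcd r0 k0 ∣ (x:ℕ) := by
              rw [hxeq]; exact Nat.dvd_add (Dvd.dvd.mul_right hd2 _) hd1
            have hprime : Nat.Prime (x:ℕ) := hx
            rcases (Nat.Prime.eq_one_or_self_of_dvd hprime _ hdx) with h1 | h1
            · exact hg h1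
            · have : Nat.gcd r0 k0 ≤ k0 := Nat.le_of_dvd hk0pos hd2
              omega
          set h : ℕ+ := ⟨r0, hr0pos⟩ with hh
          set y : ℕ+ := ⟨y0, hy0pos⟩ with hy
          have hmem : h ∈ S := by
            rw [hS, Finset.mem_filter, Finset.mem_Icc]
            refine ⟨⟨h.one_le, ?_⟩, hcop⟩
            rw [← PNat.coe_le_coe]; exact hr0le
          refine Set.mem_biUnion hmem ⟨hx, ⟨y, ?_⟩⟩
          apply PNat.coe_injective
          push_cast
          rw [hxeq]; rfl
      · intro x hx
        rcases hx with hx | hx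
        · obtain ⟨p, hp, hxp⟩ := Set.mem_iUnion₂.mp hx
          rw [Set.mem_singleton_iff] at hxp
          subst hxp
          exact (Finset.mem_filter.mp hp).2
        · obtain ⟨h, _, hxh⟩ := Set.mem_iUnion₂.mp hx
          exact hxh.1
    have hU1 : μ (⋃ p ∈ F, ({p} : Set ℕ+)) ≤ 0 := by
      calc μ (⋃ p ∈ F, ({p} : Set ℕ+)) ≤ ∑ p ∈ F, μ {p} := hfin F _
        _ ≤ 0 := Finset.sum_nonpos fun p _ => hsingle p
    have hU2 : μ (⋃ h ∈ S, P ∩ C h) ≤ (S.card : ℝ) * ((k0:ℕ):ℝ)⁻¹ := by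
      calc μ (⋃ h ∈ S, P ∩ C h) ≤ ∑ h ∈ S, μ (P ∩ C h) := hfin S _
        _ ≤ ∑ h ∈ S, ((k0:ℕ):ℝ)⁻¹ := by
            refine Finset.sum_le_sum fun h _ => ?_
            have := hclass (P ∩ C h) k h (fun x hx => hx.2)
            rwa [hkk] at this
        _ = (S.card : ℝ) * ((k0:ℕ):ℝ)⁻¹ := by rw [Finset.sum_const, nsmul_eq_mul]
    -- card S ≤ totient k0
    have hcard : S.card ≤ k0.totient := by
      rw [Nat.totient]
      refine Finset.card_le_card_of_injOn (fun h : ℕ+ => (h:ℕ) % k0)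
        (fun h hh => ?_) (fun a ha b hb hab => ?_)
      · rw [hS, Finset.mem_coe, Finset.mem_filter, Finset.mem_Icc] at hh
        obtain ⟨⟨h1, h2⟩, hcop⟩ := hh
        rw [Finset.mem_coe, Finset.mem_filter, Finset.mem_range]
        refine ⟨Nat.mod_lt _ hk0pos, ?_⟩
        have h3 : Nat.Coprime ((h:ℕ) % k0) k0 := by
          have h4 := hcop.symm
          rw [Nat.Coprime] at h4 ⊢
          rwa [Nat.gcd_rec] at h4
        exact h3.symm
      · 
        rw [Finset.mem_coe, Finset.mem_filter, Finset.mem_Icc] at ha hb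
        have ha2 : (a:ℕ) ≤ k0 := by rw [← hkk, ← PNat.coe_le_coe] at *; exact ha.1.2
        have hb2 : (b:ℕ) ≤ k0 := by rw [← hkk, ← PNat.coe_le_coe] at *; exact hb.1.2
        have ha1 : 1 ≤ (a:ℕ) := a.one_le
        have hb1 : 1 ≤ (b:ℕ) := b.one_le
        apply PNat.coe_injective
        simp only at hab
        rcases eq_or_lt_of_le ha2 with h | h <;> rcases eq_or_lt_of_le hb2 with h' | h'
        · omega
        · rw [h, Nat.mod_self, Nat.mod_eq_of_lt h'] at hab; omega
        · rw [h', Nat.mod_self, Nat.mod_eq_of_lt h] at hab; omega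
        · rwa [Nat.mod_eq_of_lt h, Nat.mod_eq_of_lt h'] at hab
    -- totient k0 / k0 = product
    have hprimef : k0.primeFactors = s :=
      Nat.primeFactors_prod fun p hp => (Finset.mem_filter.mp hp).2
    have htot : (k0.totient : ℝ) = (k0 : ℝ) * ∏ p ∈ s, (1 - (p:ℝ)⁻¹) := by
      have hq := Nat.totient_eq_mul_prod_factors k0
      have := congrArg (fun q : ℚ => (q : ℝ)) hq
      push_cast at this
      rw [hprimef] at this
      push_cast
      convert this using 2
    have hfinal : (S.card : ℝ) * ((k0:ℕ):ℝ)⁻¹ ≤ ∏ p ∈ s, (1 - (p:ℝ)⁻¹) := by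
      have hc : (S.card : ℝ) ≤ (k0.totient : ℝ) := by exact_mod_cast hcard
      rw [htot] at hc
      have hk0r : (0:ℝ) < (k0:ℝ) := by exact_mod_cast hk0pos
      rw [mul_comm ((k0:ℝ)) _] at hc
      calc (S.card : ℝ) * ((k0:ℕ):ℝ)⁻¹ ≤ ((∏ p ∈ s, (1 - (p:ℝ)⁻¹)) * (k0:ℝ)) * ((k0:ℕ):ℝ)⁻¹ := by
            apply mul_le_mul_of_nonneg_right hc (by positivity)
        _ = ∏ p ∈ s, (1 - (p:ℝ)⁻¹) := by
            push_cast
            field_simp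
    calc μ P = μ ((⋃ p ∈ F, ({p} : Set ℕ+)) ∪ (⋃ h ∈ S, P ∩ C h)) := by rw [← hcover]
      _ ≤ μ (⋃ p ∈ F, ({p} : Set ℕ+)) + μ (⋃ h ∈ S, P ∩ C h) := hsub _ _
      _ ≤ 0 + (S.card : ℝ) * ((k0:ℕ):ℝ)⁻¹ := add_le_add hU1 hU2
      _ ≤ ∏ p ∈ s, (1 - (p:ℝ)⁻¹) := by rw [zero_add]; exact hfinal
      _ ≤ ε := le_of_lt hN
  have : μ P ≤ 0 := by
    by_contra hc
    push_neg at hc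
    have := hmain (μ P / 2) (by linarith)
    linarith
  exact le_antisymm this (hnn P)
end

section
/- Let μ* be an upper density on ℕ⁺ and μ∗ its lower dual. If X, Y ⊆ ℕ⁺ have finite symmetric difference, then μ*(X) = μ*(Y) and μ∗(X) = μ∗(Y). -/
theorem stmt18 (μ : Set ℕ+ → ℝ)
    (huniv : μ Set.univ = 1)
    (hmono : ∀ X Y : Set ℕ+, X ⊆ Y → μ X ≤ μ Y)
    (hsub : ∀ X Y : Set ℕ+, μ (X ∪ Y) ≤ μ X + μ Y)
    (hhom : ∀ (X : Set ℕ+) (h k : ℕ+),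
      μ ((fun x => k * x + h) '' X) = ((k : ℕ) : ℝ)⁻¹ * μ X)
    (X Y : Set ℕ+) (hfin : ((X \ Y) ∪ (Y \ X)).Finite) :
    μ X = μ Y ∧ 1 - μ Xᶜ = 1 - μ Yᶜ := by
  -- μ ∅ = 0
  have hempty : μ (∅ : Set ℕ+) = 0 := by
    have h := hhom ∅ 1 2
    rw [Set.image_empty] at h
    norm_num at h
    linarith
  -- μ {n} = 0
  have hsingle : ∀ n : ℕ+, μ {n} = 0 := by
    intro n
    have hnonneg : 0 ≤ μ {n} := hempty ▸ hmono ∅ {n} (Set.empty_subset _)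
    have hle : ∀ k : ℕ+, μ {n} ≤ ((k : ℕ) : ℝ)⁻¹ := by
      intro k
      have htrans : μ {n + k} = μ {n} := by
        have h := hhom {n} k 1
        rw [Set.image_singleton] at h
        simpa [one_mul, add_comm] using h
      have hmem : ({n + k} : Set ℕ+) ⊆ (fun x => k * x + n) '' Set.univ := by
        intro x hx
        rw [Set.mem_singleton_iff] at hx
        exact ⟨1, trivial, by simp [hx, mul_one, add_comm]⟩
      have := hmono _ _ hmem
      rw [hhom Set.univ n k, huniv, mul_one] at this
      linarith [htrans]
    by_contra hne
    have hpos : 0 < μ {n} := lt_of_le_of_ne hnonneg (Ne.symm hne)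
    obtain ⟨m, hm⟩ := exists_nat_gt (μ {n})⁻¹
    have hk := hle ⟨m + 1, Nat.succ_pos m⟩
    have hmpos : (0 : ℝ) < (m : ℝ) + 1 := by positivity
    have : (μ {n})⁻¹ < (m : ℝ) + 1 := by linarith
    have h1 : ((m : ℝ) + 1)⁻¹ < μ {n} := by
      rw [inv_lt_comm₀ hmpos hpos]
      exact this
    have hk' : μ {n} ≤ (((m + 1 : ℕ) : ℝ))⁻¹ := hk
    push_cast at hk'
    linarith
  -- μ of any finite set is 0
  have hfinzero : ∀ F : Set ℕ+, F.Finite → μ F = 0 := by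
    intro F hF
    refine Set.Finite.induction_on F hF hempty ?_
    intro a s _ _ ih
    · have h1 : μ (insert a s) ≤ μ {a} + μ s := by
        have := hsub {a} s
        rwa [Set.singleton_union] at this
      rw [hsingle a, ih, add_zero] at h1
      have h2 : 0 ≤ μ (insert a s) :=
        hempty ▸ hmono ∅ _ (Set.empty_subset _)
      linarith
  -- key: if A \ B finite then μ A ≤ μ B
  have key : ∀ A B : Set ℕ+, (A \ B).Finite → μ A ≤ μ B := by
    intro A B h
    have hsubset : A ⊆ B ∪ (A \ B) := by
      intro x hx
      by_cases hxB : x ∈ B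
      · exact Or.inl hxB
      · exact Or.inr ⟨hx, hxB⟩
    calc μ A ≤ μ (B ∪ (A \ B)) := hmono _ _ hsubset
      _ ≤ μ B + μ (A \ B) := hsub _ _
      _ = μ B := by rw [hfinzero _ h, add_zero]
  have hXY : (X \ Y).Finite := hfin.subset Set.subset_union_left
  have hYX : (Y \ X).Finite := hfin.subset Set.subset_union_right
  have hcXY : (Xᶜ \ Yᶜ).Finite := by
    have : Xᶜ \ Yᶜ = Y \ X := by
      ext x; simp [Set.mem_diff, and_comm]
    rw [this]; exact hYX
  have hcYX : (Yᶜ \ Xᶜ).Finite := by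
    have : Yᶜ \ Xᶜ = X \ Y := by
      ext x; simp [Set.mem_diff, and_comm]
    rw [this]; exact hXY
  refine ⟨le_antisymm (key X Y hXY) (key Y X hYX), ?_⟩
  have := le_antisymm (key Xᶜ Yᶜ hcXY) (key Yᶜ Xᶜ hcYX)
  linarith
end
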